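/- arXiv:1807.06825 — 5 statements merged into one kernel-verified Lean document; each statement's English description precedes it below -/
import Mathlib

section
/- (Brezis–Gallouet inequality on 𝕋², homogeneous form, which is the classical core of Theorem 2.36 of the paper.) There is an absolute constant C > 0 with the following property: for every a : ℤ² → ℂ with ‖a‖_{h²} < ∞ and a not identically zero, one has Σ_{k∈ℤ²} |a(k)| ≤ C · ‖a‖_{h¹} · √(1 + log(1 + ‖a‖_{h²}/‖a‖_{h¹})). In particular, a function v on 𝕋² with Fourier coefficients a satisfies ‖v‖_{L^∞} ≤ C · ‖v‖_{H¹} · √(1 + log(1 + ‖v‖_{H²}/‖v‖_{H¹})). -/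
noncomputable section

/-- Squared Euclidean norm of a lattice point `k ∈ ℤ^d`. -/
def latSq {d : ℕ} (k : Fin d → ℤ) : ℝ := ∑ i, ((k i : ℝ)) ^ 2

/-- Weighted `ℓ²` (Sobolev) norm `‖a‖_{h^s} = (Σ_k (1+|k|²)^s |a(k)|²)^{1/2}` of a
family of Fourier coefficients `a : ℤ^d → ℂ`. -/
def hnorm {d : ℕ} (s : ℝ) (a : (Fin d → ℤ) → ℂ) : ℝ :=
  Real.sqrt (∑' k, (1 + latSq k) ^ s * ‖a k‖ ^ 2)

open Real Finset

set_option maxHeartbeats 1600000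

namespace BG

/-- Cauchy–Schwarz for tsums. -/
lemma cs_tsum {ι : Type*} {u v : ι → ℝ} (hu : ∀ i, 0 ≤ u i) (hv : ∀ i, 0 ≤ v i)
    (hu2 : Summable (fun i => u i ^ 2)) (hv2 : Summable (fun i => v i ^ 2)) :
    Summable (fun i => u i * v i) ∧
      ∑' i, u i * v i ≤ Real.sqrt (∑' i, u i ^ 2) * Real.sqrt (∑' i, v i ^ 2) := by
  have hsum : Summable (fun i => u i * v i) := by
    refine Summable.of_nonneg_of_le (fun i => mul_nonneg (hu i) (hv i))
      (fun i => ?_) ((hu2.add hv2).div_const 2)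
    have := sq_nonneg (u i - v i)
    nlinarith
  refine ⟨hsum, Summable.tsum_le_of_sum_le hsum fun s => ?_⟩
  calc ∑ i ∈ s, u i * v i ≤ Real.sqrt (∑ i ∈ s, u i ^ 2) * Real.sqrt (∑ i ∈ s, v i ^ 2) :=
        Real.sum_mul_le_sqrt_mul_sqrt s u v
    _ ≤ Real.sqrt (∑' i, u i ^ 2) * Real.sqrt (∑' i, v i ^ 2) := by
        exact mul_le_mul (Real.sqrt_le_sqrt (Summable.sum_le_tsum s (fun i _ => sq_nonneg _) hu2))
          (Real.sqrt_le_sqrt (Summable.sum_le_tsum s (fun i _ => sq_nonneg _) hv2))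
          (Real.sqrt_nonneg _) (Real.sqrt_nonneg _)

/-- 1D slice sum over ℕ. -/
lemma nat_slice {c : ℝ} (hc : 1 ≤ c) :
    Summable (fun n : ℕ => 1 / (c + (n : ℝ) ^ 2)) ∧
      ∑' n : ℕ, 1 / (c + (n : ℝ) ^ 2) ≤ 4 / Real.sqrt c := by
  have hc0 : (0 : ℝ) < c := lt_of_lt_of_le one_pos hc
  have hsc : (1 : ℝ) ≤ Real.sqrt c := by
    rw [show (1:ℝ) = Real.sqrt 1 by simp]; exact Real.sqrt_le_sqrt hc
  have hsc0 : (0 : ℝ) < Real.sqrt c := lt_of_lt_of_le one_pos hsc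
  have hpos : ∀ n : ℕ, (0:ℝ) < c + (n:ℝ)^2 := fun n => by positivity
  -- summability
  have hmaj : Summable (fun n : ℕ => 2 / ((n : ℝ) + 1) ^ 2) := by
    have h0 : Summable (fun n : ℕ => 1 / (n : ℝ) ^ 2) :=
      summable_one_div_nat_pow.mpr one_lt_two
    have h1 : Summable (fun n : ℕ => 1 / ((n : ℝ) + 1) ^ 2) := by
      have := (summable_nat_add_iff 1).mpr h0
      simpa [Nat.cast_add] using this
    simpa [div_eq_mul_inv, one_div] using h1.mul_left 2
  have hsummable : Summable (fun n : ℕ => 1 / (c + (n : ℝ) ^ 2)) := by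
    refine Summable.of_nonneg_of_le (fun n => by positivity) (fun n => ?_) hmaj
    rw [div_le_div_iff₀ (hpos n) (by positivity)]
    nlinarith [sq_nonneg ((n:ℝ) - 1)]
  refine ⟨hsummable, ?_⟩
  set m : ℕ := ⌊Real.sqrt c⌋₊ with hm
  have hm1 : 1 ≤ m := Nat.one_le_iff_ne_zero.mpr (by
    simp only [hm, ne_eq, Nat.floor_eq_zero, not_lt]; exact hsc)
  have hmle : (m : ℝ) ≤ Real.sqrt c := Nat.floor_le (le_of_lt hsc0)
  have hmgt : Real.sqrt c < (m : ℝ) + 1 := Nat.lt_floor_add_one _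
  have hm0 : (0:ℝ) < (m:ℝ) := by exact_mod_cast hm1
  -- split
  rw [← Summable.sum_add_tsum_nat_add (m + 1) hsummable]
  have head : ∑ i ∈ Finset.range (m + 1), 1 / (c + (i : ℝ) ^ 2) ≤ 2 / Real.sqrt c := by
    calc ∑ i ∈ Finset.range (m + 1), 1 / (c + (i : ℝ) ^ 2)
        ≤ ∑ _i ∈ Finset.range (m + 1), 1 / c := by
          refine Finset.sum_le_sum fun i _ => ?_
          rw [div_le_div_iff₀ (hpos i) hc0]; nlinarith [sq_nonneg (i:ℝ)]
      _ = ((m : ℝ) + 1) / c := by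
          rw [Finset.sum_const, Finset.card_range]; push_cast; ring
      _ ≤ 2 / Real.sqrt c := by
          rw [div_le_div_iff₀ hc0 hsc0]
          have h2 : (m : ℝ) + 1 ≤ 2 * Real.sqrt c := by nlinarith
          nlinarith [Real.sq_sqrt (le_of_lt hc0), Real.sqrt_nonneg c]
  have tail : ∑' i : ℕ, 1 / (c + ((i + (m + 1) : ℕ) : ℝ) ^ 2) ≤ 2 / Real.sqrt c := by
    have hterm : ∀ i : ℕ, 1 / (c + ((i + (m + 1) : ℕ) : ℝ) ^ 2)
        ≤ (((i + (m + 1) : ℕ) : ℝ) ^ 2)⁻¹ := by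
      intro i
      rw [one_div]
      apply inv_anti₀ (by positivity)
      nlinarith [hpos (i + (m+1))]
    have htail : ∀ s : Finset ℕ, ∑ i ∈ s, 1 / (c + ((i + (m + 1) : ℕ) : ℝ) ^ 2) ≤ 1 / (m:ℝ) := by
      intro s
      obtain ⟨N, hN⟩ : ∃ N, s ⊆ Finset.range N := ⟨(s.sup id) + 1, fun x hx =>
        Finset.mem_range.mpr (Nat.lt_succ_of_le (Finset.le_sup (f := id) hx))⟩
      calc ∑ i ∈ s, 1 / (c + ((i + (m + 1) : ℕ) : ℝ) ^ 2)
          ≤ ∑ i ∈ Finset.range N, 1 / (c + ((i + (m + 1) : ℕ) : ℝ) ^ 2) := by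
            refine Finset.sum_le_sum_of_subset_of_nonneg hN fun i _ _ => by positivity
        _ ≤ ∑ i ∈ Finset.range N, (((i + (m + 1) : ℕ) : ℝ) ^ 2)⁻¹ :=
            Finset.sum_le_sum fun i _ => hterm i
        _ = ∑ j ∈ Finset.Ioc m (N + m), ((j : ℝ) ^ 2)⁻¹ := by
            rw [← Finset.Ico_add_one_add_one_eq_Ioc, Finset.sum_Ico_eq_sum_range]
            rw [show N + m + 1 - (m + 1) = N by omega]
            refine Finset.sum_congr rfl fun i _ => by rw [show m + 1 + i = i + (m+1) by omega]
        _ ≤ (m : ℝ)⁻¹ - ((N + m : ℕ) : ℝ)⁻¹ :=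
            sum_Ioc_inv_sq_le_sub (by omega) (by omega)
        _ ≤ 1 / (m : ℝ) := by rw [one_div]; simp [inv_nonneg.mpr]; positivity
    have hsum' : Summable fun i : ℕ => 1 / (c + ((i + (m + 1) : ℕ) : ℝ) ^ 2) := by
      have := (summable_nat_add_iff (m+1)).mpr hsummable
      simpa using this
    calc ∑' i : ℕ, 1 / (c + ((i + (m + 1) : ℕ) : ℝ) ^ 2) ≤ 1 / (m : ℝ) :=
          Summable.tsum_le_of_sum_le hsum' htail
      _ ≤ 2 / Real.sqrt c := by
          have hm1' : (1:ℝ) ≤ (m:ℝ) := by exact_mod_cast hm1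
          rw [div_le_div_iff₀ hm0 hsc0]; nlinarith
  have h4 : (2:ℝ) / Real.sqrt c + 2 / Real.sqrt c = 4 / Real.sqrt c := by ring
  linarith [head, tail]


/-- 1D slice sum over ℤ. -/
lemma int_slice {c : ℝ} (hc : 1 ≤ c) :
    Summable (fun j : ℤ => 1 / (c + (j : ℝ) ^ 2)) ∧
      ∑' j : ℤ, 1 / (c + (j : ℝ) ^ 2) ≤ 8 / Real.sqrt c := by
  obtain ⟨hs, hb⟩ := nat_slice hc
  have hc0 : (0:ℝ) < c := lt_of_lt_of_le one_pos hc
  have h1 : Summable (fun n : ℕ => 1 / (c + ((n : ℤ) : ℝ) ^ 2)) := by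
    simpa using hs
  have h2 : Summable (fun n : ℕ => 1 / (c + ((-(n + 1) : ℤ) : ℝ) ^ 2)) := by
    have := (summable_nat_add_iff 1).mpr hs
    refine this.congr fun n => ?_
    push_cast; ring_nf
  have hsum : Summable (fun j : ℤ => 1 / (c + (j : ℝ) ^ 2)) :=
    Summable.of_nat_of_neg_add_one h1 h2
  refine ⟨hsum, ?_⟩
  rw [tsum_of_nat_of_neg_add_one h1 h2]
  have hb2 : ∑' n : ℕ, 1 / (c + ((-(n + 1) : ℤ) : ℝ) ^ 2) ≤ 4 / Real.sqrt c := by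
    refine le_trans (Summable.tsum_le_tsum (fun n => ?_) h2 hs) hb
    have h0 : (0:ℝ) < c + (n:ℝ)^2 := by positivity
    rw [div_le_div_iff₀ (by positivity) h0]
    push_cast; nlinarith [Nat.cast_nonneg (α := ℝ) n]
  have hb1 : ∑' n : ℕ, 1 / (c + ((n : ℤ) : ℝ) ^ 2) ≤ 4 / Real.sqrt c := by
    refine le_trans (le_of_eq (tsum_congr fun n => by push_cast; ring_nf)) hb
  have : (4:ℝ)/Real.sqrt c + 4/Real.sqrt c = 8/Real.sqrt c := by ring
  linarith

/-- 1D slice sum with power 3/2 over ℤ. -/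
lemma int_slice32 {c : ℝ} (hc : 1 ≤ c) :
    Summable (fun j : ℤ => 1 / ((c + (j : ℝ) ^ 2) * Real.sqrt (c + (j : ℝ) ^ 2))) ∧
      ∑' j : ℤ, 1 / ((c + (j : ℝ) ^ 2) * Real.sqrt (c + (j : ℝ) ^ 2)) ≤ 8 / c := by
  obtain ⟨hs, hb⟩ := int_slice hc
  have hc0 : (0:ℝ) < c := lt_of_lt_of_le one_pos hc
  have hsc0 : (0:ℝ) < Real.sqrt c := Real.sqrt_pos.mpr hc0
  have key : ∀ j : ℤ, 1 / ((c + (j : ℝ) ^ 2) * Real.sqrt (c + (j : ℝ) ^ 2))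
      ≤ (Real.sqrt c)⁻¹ * (1 / (c + (j : ℝ) ^ 2)) := by
    intro j
    have h0 : (0:ℝ) < c + (j:ℝ)^2 := by positivity
    have hsj : Real.sqrt c ≤ Real.sqrt (c + (j:ℝ)^2) :=
      Real.sqrt_le_sqrt (by nlinarith [sq_nonneg (j:ℝ)])
    rw [one_div, mul_one_div, div_eq_mul_inv, ← mul_inv]
    apply inv_anti₀ (by positivity)
    have := Real.sqrt_pos.mpr h0
    nlinarith
  have hsum : Summable (fun j : ℤ => 1 / ((c + (j : ℝ) ^ 2) * Real.sqrt (c + (j : ℝ) ^ 2))) := by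
    refine Summable.of_nonneg_of_le (fun j => by positivity) key ?_
    exact hs.mul_left _
  refine ⟨hsum, ?_⟩
  calc ∑' j : ℤ, 1 / ((c + (j : ℝ) ^ 2) * Real.sqrt (c + (j : ℝ) ^ 2))
      ≤ ∑' j : ℤ, (Real.sqrt c)⁻¹ * (1 / (c + (j : ℝ) ^ 2)) :=
        Summable.tsum_le_tsum key hsum (hs.mul_left _)
    _ = (Real.sqrt c)⁻¹ * ∑' j : ℤ, 1 / (c + (j : ℝ) ^ 2) := tsum_mul_left
    _ ≤ (Real.sqrt c)⁻¹ * (8 / Real.sqrt c) := by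
        exact mul_le_mul_of_nonneg_left hb (by positivity)
    _ = 8 / c := by
        rw [inv_mul_eq_div, div_div, Real.mul_self_sqrt hc0.le]


lemma one_le_W (i : ℤ) : (1:ℝ) ≤ 1 + (i:ℝ)^2 := by nlinarith [sq_nonneg (i:ℝ)]

/-- 2D sum of `(1+|k|²)^{-3/2}`. -/
lemma sum2d :
    Summable (fun p : ℤ × ℤ =>
      1 / ((1 + (p.1:ℝ)^2 + (p.2:ℝ)^2) * Real.sqrt (1 + (p.1:ℝ)^2 + (p.2:ℝ)^2))) ∧
    ∑' p : ℤ × ℤ, 1 / ((1 + (p.1:ℝ)^2 + (p.2:ℝ)^2) * Real.sqrt (1 + (p.1:ℝ)^2 + (p.2:ℝ)^2))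
      ≤ 64 := by
  set f : ℤ × ℤ → ℝ := fun p =>
    1 / ((1 + (p.1:ℝ)^2 + (p.2:ℝ)^2) * Real.sqrt (1 + (p.1:ℝ)^2 + (p.2:ℝ)^2)) with hf
  have hnn : 0 ≤ f := fun p => by positivity
  have hslice : ∀ i : ℤ, Summable (fun j : ℤ => f (i, j)) := fun i => (int_slice32 (one_le_W i)).1
  have hsliceb : ∀ i : ℤ, ∑' j : ℤ, f (i, j) ≤ 8 * (1 / (1 + (i:ℝ)^2)) := by
    intro i
    have := (int_slice32 (one_le_W i)).2
    calc ∑' j : ℤ, f (i, j) ≤ 8 / (1 + (i:ℝ)^2) := this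
      _ = 8 * (1 / (1 + (i:ℝ)^2)) := by ring
  have houter : Summable (fun i : ℤ => ∑' j : ℤ, f (i, j)) := by
    refine Summable.of_nonneg_of_le (fun i => tsum_nonneg (fun j => hnn (i, j)))
      hsliceb (((int_slice (le_refl 1)).1).mul_left 8)
  have hsum : Summable f := by
    rw [summable_prod_of_nonneg hnn]
    exact ⟨fun i => hslice i, houter⟩
  refine ⟨hsum, ?_⟩
  rw [Summable.tsum_prod hsum]
  calc ∑' i : ℤ, ∑' j : ℤ, f (i, j) ≤ ∑' i : ℤ, 8 * (1 / (1 + (i:ℝ)^2)) :=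
        Summable.tsum_le_tsum hsliceb houter (((int_slice (le_refl 1)).1).mul_left 8)
    _ = 8 * ∑' i : ℤ, 1 / (1 + (i:ℝ)^2) := tsum_mul_left
    _ ≤ 8 * (8 / Real.sqrt 1) := by
        exact mul_le_mul_of_nonneg_left (int_slice (le_refl 1)).2 (by norm_num)
    _ ≤ 64 := by rw [Real.sqrt_one]; norm_num


lemma if_sq_le {R x : ℝ} (hR0 : 0 < R) (hx : 0 ≤ x) :
    (if x^2 ≤ R^2 then 8 / Real.sqrt (1 + x^2) else 0) ≤
      (if x ≤ R then 16 / (1 + x) else 0) := by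
  by_cases h : x^2 ≤ R^2
  · have hxR : x ≤ R := by nlinarith
    rw [if_pos h, if_pos hxR]
    have hs : (1 + x) / 2 ≤ Real.sqrt (1 + x^2) :=
      Real.le_sqrt_of_sq_le (by nlinarith [sq_nonneg (x - 1)])
    have hs0 : (0:ℝ) < Real.sqrt (1 + x^2) := Real.sqrt_pos.mpr (by positivity)
    rw [div_le_div_iff₀ hs0 (by positivity)]
    nlinarith
  · rw [if_neg h]
    split <;> positivity

/-- Low-frequency sum bound: `Σ_{1+|k|² ≤ R²} (1+|k|²)⁻¹ ≤ 64 (1 + log R)`. -/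
lemma S1bound {R : ℝ} (hR : 1 ≤ R) :
    Summable (fun p : ℤ × ℤ =>
      if 1 + (p.1:ℝ)^2 + (p.2:ℝ)^2 ≤ R^2 then (1 + (p.1:ℝ)^2 + (p.2:ℝ)^2)⁻¹ else 0) ∧
    ∑' p : ℤ × ℤ,
      (if 1 + (p.1:ℝ)^2 + (p.2:ℝ)^2 ≤ R^2 then (1 + (p.1:ℝ)^2 + (p.2:ℝ)^2)⁻¹ else 0)
      ≤ 64 * (1 + Real.log R) := by
  have hR0 : (0:ℝ) < R := lt_of_lt_of_le one_pos hR
  set F : ℤ × ℤ → ℝ := fun p =>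
    if 1 + (p.1:ℝ)^2 + (p.2:ℝ)^2 ≤ R^2 then (1 + (p.1:ℝ)^2 + (p.2:ℝ)^2)⁻¹ else 0 with hF
  have hnn : 0 ≤ F := fun p => by
    simp only [hF]; split <;> positivity
  -- summability via finite support
  have hbox : ∀ p : ℤ × ℤ, p ∉ Finset.Icc (-⌊R⌋, -⌊R⌋) (⌊R⌋, ⌊R⌋) → F p = 0 := by
    intro p hp
    simp only [hF]
    rw [if_neg]
    intro hle
    apply hp
    rw [Finset.mem_Icc, Prod.le_def, Prod.le_def]
    have h1 : ((p.1:ℝ))^2 ≤ R^2 := by nlinarith [sq_nonneg (p.2:ℝ)]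
    have h2 : ((p.2:ℝ))^2 ≤ R^2 := by nlinarith [sq_nonneg (p.1:ℝ)]
    have k1 : (p.1:ℝ) ≤ R ∧ -R ≤ (p.1:ℝ) := by constructor <;> nlinarith
    have k2 : (p.2:ℝ) ≤ R ∧ -R ≤ (p.2:ℝ) := by constructor <;> nlinarith
    refine ⟨⟨?_, ?_⟩, ?_, ?_⟩
    · rw [neg_le]; rw [Int.le_floor]; push_cast; linarith [k1.2]
    · rw [neg_le]; rw [Int.le_floor]; push_cast; linarith [k2.2]
    · exact Int.le_floor.mpr k1.1
    · exact Int.le_floor.mpr k2.1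
  have hsum : Summable F := summable_of_ne_finset_zero hbox
  refine ⟨hsum, ?_⟩
  -- inner slice bound
  set g : ℤ → ℝ := fun i => if (i:ℝ)^2 ≤ R^2 then 8 / Real.sqrt (1 + (i:ℝ)^2) else 0 with hg
  have hgnn : ∀ i, 0 ≤ g i := fun i => by simp only [hg]; split <;> positivity
  have hinner : ∀ i : ℤ, ∑' j : ℤ, F (i, j) ≤ g i := by
    intro i
    by_cases hi : (i:ℝ)^2 ≤ R^2
    · have hle : ∀ j : ℤ, F (i, j) ≤ 1 / ((1 + (i:ℝ)^2) + (j:ℝ)^2) := by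
        intro j
        simp only [hF]
        split
        · rw [one_div]
        · positivity
      calc ∑' j : ℤ, F (i, j) ≤ ∑' j : ℤ, 1 / ((1 + (i:ℝ)^2) + (j:ℝ)^2) :=
            Summable.tsum_le_tsum hle (hsum.prod_factor i) (int_slice (one_le_W i)).1
        _ ≤ 8 / Real.sqrt (1 + (i:ℝ)^2) := (int_slice (one_le_W i)).2
        _ = g i := by rw [hg]; simp [hi]
    · have : ∀ j : ℤ, F (i, j) = 0 := by
        intro j
        simp only [hF]
        rw [if_neg]
        intro hle
        exact hi (by nlinarith [sq_nonneg (j:ℝ)])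
      rw [tsum_congr this, tsum_zero, hg]
      simp [hi]
  -- the outer comparison function ψ over ℕ
  set N : ℕ := ⌊R⌋₊ with hN
  have hNR : (N : ℝ) ≤ R := Nat.floor_le hR0.le
  set ψ : ℕ → ℝ := fun n => if (n:ℝ) ≤ R then 16 / (1 + (n:ℝ)) else 0 with hψ
  have hψnn : ∀ n, 0 ≤ ψ n := fun n => by simp only [hψ]; split <;> positivity
  have hψsupp : ∀ n : ℕ, n ∉ Finset.range (N + 1) → ψ n = 0 := by
    intro n hn
    simp only [hψ]
    rw [if_neg]
    intro hle
    exact hn (Finset.mem_range.mpr (Nat.lt_succ_of_le (Nat.le_floor hle)))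
  have hψsum : Summable ψ := summable_of_ne_finset_zero hψsupp
  have hψb : ∑' n : ℕ, ψ n ≤ 32 * (1 + Real.log R) := by
    rw [tsum_eq_sum hψsupp]
    have hstep : ∑ n ∈ Finset.range (N + 1), ψ n
        ≤ 16 * ((harmonic (N + 1) : ℚ) : ℝ) := by
      rw [harmonic]
      push_cast
      rw [Finset.mul_sum]
      refine Finset.sum_le_sum fun n _ => ?_
      simp only [hψ]
      split
      · apply le_of_eq
        rw [div_eq_mul_inv, add_comm (1:ℝ) (n:ℝ)]
      · positivity
    have hlog : ((harmonic (N + 1) : ℚ) : ℝ) ≤ 1 + Real.log ((N:ℝ) + 1) := by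
      have := harmonic_le_one_add_log (N + 1)
      push_cast at this ⊢
      exact this
    have hlog2 : Real.log ((N:ℝ) + 1) ≤ 1 + Real.log R := by
      have h1 : ((N:ℝ) + 1) ≤ 2 * R := by linarith
      have h2 : Real.log ((N:ℝ) + 1) ≤ Real.log (2 * R) :=
        Real.log_le_log (by positivity) h1
      rw [Real.log_mul (by norm_num) (ne_of_gt hR0)] at h2
      have h3 : Real.log 2 ≤ 1 := by
        have := Real.log_le_sub_one_of_pos (show (0:ℝ) < 2 by norm_num)
        linarith
      linarith
    have hlogR : 0 ≤ Real.log R := Real.log_nonneg hR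
    have : ((harmonic (N + 1) : ℚ) : ℝ) ≤ 2 + Real.log R := by linarith
    nlinarith [hlogR]
  -- compare g with ψ on both halves of ℤ
  have h1le : ∀ n : ℕ, g ((n : ℕ) : ℤ) ≤ ψ n := by
    intro n
    have := if_sq_le (x := (n:ℝ)) hR0 (Nat.cast_nonneg n)
    simpa [hg, hψ] using this
  have h2le : ∀ n : ℕ, g (-((n : ℤ) + 1)) ≤ ψ n := by
    intro n
    have h0 : ((-((n:ℤ) + 1) : ℤ) : ℝ)^2 = ((n:ℝ) + 1)^2 := by push_cast; ring
    have key := if_sq_le (x := (n:ℝ) + 1) hR0 (by positivity)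
    have step2 : (if (n:ℝ) + 1 ≤ R then 16 / (1 + ((n:ℝ) + 1)) else 0) ≤ ψ n := by
      simp only [hψ]
      by_cases h : (n:ℝ) + 1 ≤ R
      · rw [if_pos h, if_pos (by linarith)]
        rw [div_le_div_iff₀ (by positivity) (by positivity)]
        nlinarith
      · rw [if_neg h]; split <;> positivity
    have hsimp : g (-((n : ℤ) + 1)) =
        (if ((n:ℝ)+1)^2 ≤ R^2 then 8 / Real.sqrt (1+((n:ℝ)+1)^2) else 0) := by
      simp only [hg]; rw [h0]
    rw [hsimp]; exact le_trans key step2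
  have h1sum : Summable (fun n : ℕ => g ((n : ℕ) : ℤ)) :=
    Summable.of_nonneg_of_le (fun n => hgnn _) h1le hψsum
  have h2sum : Summable (fun n : ℕ => g (-((n : ℤ) + 1))) :=
    Summable.of_nonneg_of_le (fun n => hgnn _) h2le hψsum
  have hgsum : Summable g := Summable.of_nat_of_neg_add_one h1sum h2sum
  have hgb : ∑' i : ℤ, g i ≤ 64 * (1 + Real.log R) := by
    rw [tsum_of_nat_of_neg_add_one h1sum h2sum]
    have b1 : ∑' n : ℕ, g ((n : ℕ) : ℤ) ≤ 32 * (1 + Real.log R) :=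
      le_trans (Summable.tsum_le_tsum h1le h1sum hψsum) hψb
    have b2 : ∑' n : ℕ, g (-((n : ℤ) + 1)) ≤ 32 * (1 + Real.log R) :=
      le_trans (Summable.tsum_le_tsum h2le h2sum hψsum) hψb
    linarith
  -- conclude
  have houterF : Summable (fun i : ℤ => ∑' j : ℤ, F (i, j)) :=
    ((summable_prod_of_nonneg hnn).mp hsum).2
  rw [Summable.tsum_prod hsum]
  exact le_trans (Summable.tsum_le_tsum hinner houterF hgsum) hgb


end BG

open BG

/-- **Brezis–Gallouet inequality on `𝕋²`, homogeneous form.** There is an absolute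
constant `C > 0` such that every nonzero `a : ℤ² → ℂ` with `‖a‖_{h²} < ∞` satisfies
`Σ_k |a(k)| ≤ C ‖a‖_{h¹} √(1 + log(1 + ‖a‖_{h²}/‖a‖_{h¹}))`. -/
theorem brezis_gallouet_homogeneous :
    ∃ C : ℝ, 0 < C ∧ ∀ a : (Fin 2 → ℤ) → ℂ,
      Summable (fun k => (1 + latSq k) ^ (2 : ℝ) * ‖a k‖ ^ 2) →
      a ≠ 0 →
      Summable (fun k => ‖a k‖) ∧
      ∑' k, ‖a k‖ ≤ C * hnorm 1 a *
        Real.sqrt (1 + Real.log (1 + hnorm 2 a / hnorm 1 a)) := by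
  refine ⟨20, by norm_num, fun a hsum2 ha => ?_⟩
  set w : (Fin 2 → ℤ) → ℝ := fun k => 1 + latSq k with hwdef
  have hw1 : ∀ k, (1:ℝ) ≤ w k := by
    intro k
    have : (0:ℝ) ≤ latSq k := Finset.sum_nonneg fun i _ => sq_nonneg _
    simp only [hwdef]; linarith
  have hw0 : ∀ k, (0:ℝ) < w k := fun k => lt_of_lt_of_le one_pos (hw1 k)
  have hr2 : ∀ k, (1 + latSq k) ^ (2:ℝ) * ‖a k‖ ^ 2 = (w k)^2 * ‖a k‖^2 := by
    intro k
    rw [show (2:ℝ) = ((2:ℕ):ℝ) by norm_num, Real.rpow_natCast]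
  have hsum2' : Summable (fun k => (w k)^2 * ‖a k‖^2) := hsum2.congr hr2
  have hsum1 : Summable (fun k => w k * ‖a k‖^2) := by
    refine Summable.of_nonneg_of_le (fun k => mul_nonneg (hw0 k).le (sq_nonneg _))
      (fun k => ?_) hsum2'
    have h1 := hw1 k
    nlinarith [mul_nonneg (mul_nonneg (hw0 k).le (sub_nonneg.mpr h1)) (sq_nonneg (‖a k‖))]
  set m := hnorm 1 a with hmdef
  set M := hnorm 2 a with hMdef
  have hm : m = Real.sqrt (∑' k, w k * ‖a k‖^2) := by
    simp only [hmdef, hnorm]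
    congr 1
    exact tsum_congr fun k => by rw [Real.rpow_one]
  have hM : M = Real.sqrt (∑' k, (w k)^2 * ‖a k‖^2) := by
    simp only [hMdef, hnorm]
    congr 1
    exact tsum_congr fun k => hr2 k
  obtain ⟨k₀, hk₀⟩ := Function.ne_iff.mp ha
  have hm0 : 0 < m := by
    rw [hm, Real.sqrt_pos]
    refine Summable.tsum_pos hsum1 (fun k => mul_nonneg (hw0 k).le (sq_nonneg _)) k₀ ?_
    have hne : a k₀ ≠ 0 := by simpa using hk₀
    have : 0 < ‖a k₀‖ := norm_pos_iff.mpr hne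
    exact mul_pos (hw0 k₀) (pow_pos this 2)
  have hmM : m ≤ M := by
    rw [hm, hM]
    apply Real.sqrt_le_sqrt
    refine Summable.tsum_le_tsum (fun k => ?_) hsum1 hsum2'
    nlinarith [mul_nonneg (mul_nonneg (hw0 k).le (sub_nonneg.mpr (hw1 k)))
      (sq_nonneg (‖a k‖))]
  set t := M / m with htdef
  have ht1 : 1 ≤ t := (one_le_div hm0).mpr hmM
  have ht0 : 0 < t := lt_of_lt_of_le one_pos ht1
  set L := Real.sqrt (1 + Real.log (1 + t)) with hLdef
  have hlog0 : 0 ≤ Real.log (1 + t) := Real.log_nonneg (by linarith)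
  have hL1 : 1 ≤ L := by
    rw [hLdef, show (1:ℝ) = Real.sqrt 1 by simp]
    exact Real.sqrt_le_sqrt (by simp at *; linarith)
  have hL0 : 0 < L := lt_of_lt_of_le one_pos hL1
  -- transfer 2D lemmas through the equivalence
  set e : (Fin 2 → ℤ) ≃ ℤ × ℤ := finTwoArrowEquiv ℤ with hedef
  have hek : ∀ k : Fin 2 → ℤ, e k = (k 0, k 1) := fun _ => rfl
  have hWe : ∀ k : Fin 2 → ℤ, w k = 1 + (((e k).1 : ℝ))^2 + (((e k).2 : ℝ))^2 := by
    intro k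
    rw [hek k]
    simp only [hwdef, latSq, Fin.sum_univ_two]
    ring
  have ht21 : (1:ℝ) ≤ t^2 := by nlinarith
  -- the four weight functions
  set u : (Fin 2 → ℤ) → ℝ := fun k => Real.sqrt (w k) * ‖a k‖ with hudef
  set v : (Fin 2 → ℤ) → ℝ := fun k => if w k ≤ (t^2)^2 then (Real.sqrt (w k))⁻¹ else 0
    with hvdef
  set u' : (Fin 2 → ℤ) → ℝ := fun k => w k * ‖a k‖ with hu'def
  set v' : (Fin 2 → ℤ) → ℝ := fun k => if (t^2)^2 < w k then (w k)⁻¹ else 0 with hv'def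
  have hunn : ∀ k, 0 ≤ u k := fun k => mul_nonneg (Real.sqrt_nonneg _) (norm_nonneg _)
  have hvnn : ∀ k, 0 ≤ v k := fun k => by
    simp only [hvdef]
    split
    · exact inv_nonneg.mpr (Real.sqrt_nonneg _)
    · exact le_rfl
  have hu'nn : ∀ k, 0 ≤ u' k := fun k => mul_nonneg (hw0 k).le (norm_nonneg _)
  have hv'nn : ∀ k, 0 ≤ v' k := fun k => by
    simp only [hv'def]
    split
    · exact inv_nonneg.mpr (hw0 k).le
    · exact le_rfl
  have hu2eq : ∀ k, u k ^ 2 = w k * ‖a k‖^2 := by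
    intro k
    simp only [hudef]
    rw [mul_pow, Real.sq_sqrt (hw0 k).le]
  have hu'2eq : ∀ k, u' k ^ 2 = (w k)^2 * ‖a k‖^2 := by
    intro k; simp only [hu'def]; rw [mul_pow]
  have hu2 : Summable (fun k => u k ^ 2) := hsum1.congr fun k => (hu2eq k).symm
  have hu'2 : Summable (fun k => u' k ^ 2) := hsum2'.congr fun k => (hu'2eq k).symm
  -- v² coincides with the S1 function transported along e
  obtain ⟨hS1sum, hS1b⟩ := S1bound ht21
  set F₁ : ℤ × ℤ → ℝ := fun p =>
    if 1 + (p.1:ℝ)^2 + (p.2:ℝ)^2 ≤ (t^2)^2 then (1 + (p.1:ℝ)^2 + (p.2:ℝ)^2)⁻¹ else 0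
    with hF₁def
  have hv2eq : ∀ k, v k ^ 2 = F₁ (e k) := by
    intro k
    simp only [hvdef, hF₁def, ← hWe k]
    split
    · rw [inv_pow, Real.sq_sqrt (hw0 k).le]
    · rw [zero_pow]; norm_num
  have hv2 : Summable (fun k => v k ^ 2) := by
    refine Summable.congr ?_ (fun k => (hv2eq k).symm)
    exact e.summable_iff.mpr hS1sum
  have hv2b : ∑' k, v k ^ 2 ≤ 64 * (1 + Real.log (t^2)) := by
    rw [tsum_congr hv2eq, e.tsum_eq F₁]
    exact hS1b
  -- v'² bounded by the 3/2-power function transported along e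
  obtain ⟨hDsum, hDb⟩ := sum2d
  set D : ℤ × ℤ → ℝ := fun p =>
    1 / ((1 + (p.1:ℝ)^2 + (p.2:ℝ)^2) * Real.sqrt (1 + (p.1:ℝ)^2 + (p.2:ℝ)^2)) with hDdef
  have hv'2le : ∀ k, v' k ^ 2 ≤ (t^2)⁻¹ * D (e k) := by
    intro k
    simp only [hv'def, hDdef, ← hWe k]
    split
    · rename_i h
      have hs : Real.sqrt (w k) * Real.sqrt (w k) = w k := Real.mul_self_sqrt (hw0 k).le
      have hts : t^2 ≤ Real.sqrt (w k) := Real.le_sqrt_of_sq_le h.le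
      have hsp : 0 < Real.sqrt (w k) := Real.sqrt_pos.mpr (hw0 k)
      rw [inv_pow, one_div, ← mul_inv]
      have h2 : Real.sqrt (w k) * (w k * Real.sqrt (w k)) = w k ^ 2 := by
        rw [show Real.sqrt (w k) * (w k * Real.sqrt (w k))
            = (Real.sqrt (w k) * Real.sqrt (w k)) * w k by ring, hs]
        ring
      have key : t^2 * (w k * Real.sqrt (w k)) ≤ w k ^ 2 := by
        rw [← h2]
        exact mul_le_mul_of_nonneg_right hts (mul_nonneg (hw0 k).le hsp.le)
      exact inv_anti₀ (mul_pos (pow_pos ht0 2) (mul_pos (hw0 k) hsp)) key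
    · rw [zero_pow (by norm_num)]
      exact mul_nonneg (inv_nonneg.mpr (sq_nonneg t))
        (div_nonneg one_pos.le (mul_nonneg (hw0 k).le (Real.sqrt_nonneg _)))
  have hv'2 : Summable (fun k => v' k ^ 2) := by
    refine Summable.of_nonneg_of_le (fun k => sq_nonneg _) hv'2le ?_
    exact (e.summable_iff.mpr hDsum).mul_left _
  have hv'2b : ∑' k, v' k ^ 2 ≤ (t^2)⁻¹ * 64 := by
    calc ∑' k, v' k ^ 2 ≤ ∑' k, (t^2)⁻¹ * D (e k) :=
          Summable.tsum_le_tsum hv'2le hv'2 ((e.summable_iff.mpr hDsum).mul_left _)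
      _ = (t^2)⁻¹ * ∑' k, D (e k) := tsum_mul_left
      _ ≤ (t^2)⁻¹ * 64 := by
          refine mul_le_mul_of_nonneg_left ?_ (by positivity)
          rw [e.tsum_eq D]; exact hDb
  -- Cauchy–Schwarz
  obtain ⟨hsl, hbl⟩ := cs_tsum hunn hvnn hu2 hv2
  obtain ⟨hsh, hbh⟩ := cs_tsum hu'nn hv'nn hu'2 hv'2
  have hsplit : ∀ k, u k * v k + u' k * v' k = ‖a k‖ := by
    intro k
    have hsp : (0:ℝ) < Real.sqrt (w k) := Real.sqrt_pos.mpr (hw0 k)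
    by_cases h : w k ≤ (t^2)^2
    · simp only [hudef, hvdef, hu'def, hv'def, if_pos h, if_neg (not_lt.mpr h)]
      field_simp
      ring
    · simp only [hudef, hvdef, hu'def, hv'def, if_neg h, if_pos (not_le.mp h)]
      field_simp [(hw0 k).ne']
      ring
  have hsummable : Summable (fun k => ‖a k‖) := (hsl.add hsh).congr hsplit
  refine ⟨hsummable, ?_⟩
  have htsum : ∑' k, ‖a k‖ = (∑' k, u k * v k) + ∑' k, u' k * v' k := by
    rw [← Summable.tsum_add hsl hsh]
    exact (tsum_congr hsplit).symm
  -- low part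
  have hsqu : Real.sqrt (∑' k, u k ^ 2) = m := by
    rw [hm, tsum_congr hu2eq]
  have hsqu' : Real.sqrt (∑' k, u' k ^ 2) = M := by
    rw [hM, tsum_congr hu'2eq]
  have hlow : ∑' k, u k * v k ≤ m * (12 * L) := by
    have h1 : ∑' k, v k ^ 2 ≤ 144 * (1 + Real.log (1 + t)) := by
      have hlt : Real.log (t^2) = 2 * Real.log t := by
        rw [show t^2 = t^2 by rfl, Real.log_pow]; push_cast; ring
      have hll : Real.log t ≤ Real.log (1 + t) := Real.log_le_log ht0 (by linarith)
      have hlt0 : 0 ≤ Real.log t := Real.log_nonneg ht1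
      calc ∑' k, v k ^ 2 ≤ 64 * (1 + Real.log (t^2)) := hv2b
        _ = 64 + 128 * Real.log t := by rw [hlt]; ring
        _ ≤ 144 * (1 + Real.log (1 + t)) := by nlinarith
    have h2 : Real.sqrt (∑' k, v k ^ 2) ≤ 12 * L := by
      calc Real.sqrt (∑' k, v k ^ 2) ≤ Real.sqrt (144 * (1 + Real.log (1 + t))) :=
            Real.sqrt_le_sqrt h1
        _ = 12 * L := by
            rw [hLdef, Real.sqrt_mul (by norm_num), show Real.sqrt 144 = 12 by
              rw [show (144:ℝ) = 12^2 by norm_num, Real.sqrt_sq]; norm_num]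
    calc ∑' k, u k * v k ≤ Real.sqrt (∑' k, u k ^ 2) * Real.sqrt (∑' k, v k ^ 2) := hbl
      _ = m * Real.sqrt (∑' k, v k ^ 2) := by rw [hsqu]
      _ ≤ m * (12 * L) := mul_le_mul_of_nonneg_left h2 hm0.le
  -- high part
  have hhigh : ∑' k, u' k * v' k ≤ 8 * m := by
    have h2 : Real.sqrt (∑' k, v' k ^ 2) ≤ 8 / t := by
      calc Real.sqrt (∑' k, v' k ^ 2) ≤ Real.sqrt ((t^2)⁻¹ * 64) :=
            Real.sqrt_le_sqrt hv'2b
        _ = 8 / t := by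
            rw [show (t^2)⁻¹ * 64 = (8/t)^2 by field_simp; ring, Real.sqrt_sq (by positivity)]
    have hM0 : 0 < M := lt_of_lt_of_le hm0 hmM
    have hMt : M * (8 / t) = 8 * m := by
      rw [htdef]
      field_simp
    calc ∑' k, u' k * v' k ≤ Real.sqrt (∑' k, u' k ^ 2) * Real.sqrt (∑' k, v' k ^ 2) := hbh
      _ = M * Real.sqrt (∑' k, v' k ^ 2) := by rw [hsqu']
      _ ≤ M * (8 / t) := mul_le_mul_of_nonneg_left h2 (le_trans hm0.le hmM)
      _ = 8 * m := hMt
  rw [htsum]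
  have : m * (12 * L) + 8 * m ≤ 20 * m * L := by nlinarith
  linarith
end
end

section
/- (Frequency–splitting estimates on ℤ², the two quantitative steps in the paper's proof of its Brezis–Gallouet inequality.) There is an absolute constant C > 0 such that for every a : ℤ² → ℂ and every real R ≥ 2 one has both (i) Σ_{k∈ℤ², |k|≤R} |a(k)| ≤ C · √(log R) · ‖a‖_{h¹}, and (ii) Σ_{k∈ℤ², |k|>R} |a(k)| ≤ C · R^{−1} · ‖a‖_{h²}. -/
noncomputable section

open scoped ENNReal

/-- Weighted `ℓ²` (Sobolev) norm `‖a‖_{h^s} = (Σ_k (1+|k|²)^s |a(k)|²)^{1/2}`,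
valued in `ℝ≥0∞` so that it is meaningful for arbitrary coefficient families. -/
def ehnorm {d : ℕ} (s : ℝ) (a : (Fin d → ℤ) → ℂ) : ℝ≥0∞ :=
  (∑' k, ENNReal.ofReal ((1 + latSq k) ^ s * ‖a k‖ ^ 2)) ^ (1 / 2 : ℝ)

open ENNReal

/-- telescoping tail bound -/
lemma tsum_ofReal_tele {f g : ℕ → ℝ} (hfnn : ∀ n, 0 ≤ f n) (hf0 : f 0 = 0)
    (h : ∀ n, f (n+1) ≤ g n - g (n+1)) (hgnn : ∀ n, 0 ≤ g n) :
    ∑' n, ENNReal.ofReal (f n) ≤ ENNReal.ofReal (g 0) := by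
  apply tsum_le_of_sum_le' (zero_le)
  intro s
  obtain ⟨K, hK⟩ := s.exists_nat_subset_range
  calc ∑ n ∈ s, ENNReal.ofReal (f n) ≤ ∑ n ∈ Finset.range K, ENNReal.ofReal (f n) :=
        Finset.sum_le_sum_of_subset hK
    _ = ENNReal.ofReal (∑ n ∈ Finset.range K, f n) :=
        (ENNReal.ofReal_sum_of_nonneg (fun n _ => hfnn n)).symm
    _ ≤ ENNReal.ofReal (g 0) := by
        apply ENNReal.ofReal_le_ofReal
        have key : ∀ K, ∑ n ∈ Finset.range (K+1), f n ≤ g 0 - g K := by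
          intro K
          induction K with
          | zero => simp [hf0]
          | succ K ih =>
            rw [Finset.sum_range_succ]
            have := h K
            linarith
        cases K with
        | zero => simp [hgnn 0]
        | succ K => have := key K; have := hgnn K; linarith

lemma tsum_int_split (F : ℤ → ℝ≥0∞) :
    ∑' y : ℤ, F y = (∑' n : ℕ, F n) + ∑' n : ℕ, F (-(n+1)) := by
  have h3 := (ENNReal.summable (f := fun n : ℕ => F n)).hasSum.int_rec
    (ENNReal.summable (f := fun n : ℕ => F (-(n+1)))).hasSum
  have he : (fun y : ℤ => F y)
      = fun y => Int.rec (fun n : ℕ => F n) (fun n : ℕ => F (-(n+1))) y := by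
    funext y
    cases y with
    | ofNat n => rfl
    | negSucc n => show F _ = F _; congr 1
  rw [he]
  exact h3.tsum_eq

lemma nat_floor_half {x : ℝ} (hx : 1 ≤ x) : x / 2 ≤ (⌊x⌋₊ : ℝ) := by
  rcases le_or_gt x 2 with h | h
  · have h1 : (1:ℕ) ≤ ⌊x⌋₊ := Nat.le_floor (by exact_mod_cast hx)
    have : (1:ℝ) ≤ (⌊x⌋₊ : ℝ) := by exact_mod_cast h1
    linarith
  · have := Nat.sub_one_lt_floor x
    linarith

lemma oneD {a : ℝ} (ha : 1 ≤ a) :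
    ∑' y : ℤ, ENNReal.ofReal ((a + (y:ℝ)^2)⁻¹) ≤ ENNReal.ofReal (8 / Real.sqrt a) := by
  have ha0 : (0:ℝ) < a := by linarith
  set sa := Real.sqrt a with hsadef
  have hsa1 : 1 ≤ sa := by
    rw [hsadef, show (1:ℝ) = Real.sqrt 1 by simp]; exact Real.sqrt_le_sqrt ha
  have hsa2 : sa ^ 2 = a := Real.sq_sqrt ha0.le
  set M := ⌊sa⌋₊ with hMdef
  have hM1 : 1 ≤ M := Nat.le_floor (by exact_mod_cast hsa1)
  have hM1' : (1:ℝ) ≤ (M:ℝ) := by exact_mod_cast hM1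
  have hMle : (M:ℝ) ≤ sa := Nat.floor_le (by linarith)
  have hMge : sa / 2 ≤ (M:ℝ) := nat_floor_half hsa1
  have hA : ∑' n : ℕ, ENNReal.ofReal ((a + (n:ℝ)^2)⁻¹) ≤ ENNReal.ofReal (4 / sa) := by
    have hterm : ∀ n : ℕ, ENNReal.ofReal ((a + (n:ℝ)^2)⁻¹)
        ≤ ENNReal.ofReal (if n ≤ M then a⁻¹ else 0)
          + ENNReal.ofReal (if M+1 ≤ n then ((n:ℝ)^2)⁻¹ else 0) := by
      intro n
      by_cases h : n ≤ M
      · rw [if_pos h, if_neg (by omega)]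
        simp only [ENNReal.ofReal_zero, add_zero]
        apply ENNReal.ofReal_le_ofReal
        apply inv_anti₀ ha0
        nlinarith [sq_nonneg (n:ℝ)]
      · rw [if_neg h, if_pos (by omega)]
        simp only [ENNReal.ofReal_zero, zero_add]
        apply ENNReal.ofReal_le_ofReal
        have hn1 : (1:ℝ) ≤ (n:ℝ) := by exact_mod_cast Nat.one_le_iff_ne_zero.2 (by omega)
        apply inv_anti₀ (by nlinarith) (by nlinarith)
    calc ∑' n : ℕ, ENNReal.ofReal ((a + (n:ℝ)^2)⁻¹)
        ≤ ∑' n : ℕ, (ENNReal.ofReal (if n ≤ M then a⁻¹ else 0)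
            + ENNReal.ofReal (if M+1 ≤ n then ((n:ℝ)^2)⁻¹ else 0)) :=
          ENNReal.tsum_le_tsum hterm
      _ = (∑' n : ℕ, ENNReal.ofReal (if n ≤ M then a⁻¹ else 0))
            + ∑' n : ℕ, ENNReal.ofReal (if M+1 ≤ n then ((n:ℝ)^2)⁻¹ else 0) :=
          ENNReal.tsum_add
      _ ≤ ENNReal.ofReal (((M:ℝ)+1) * a⁻¹) + ENNReal.ofReal ((M:ℝ)⁻¹) := by
          gcongr
          · rw [tsum_eq_sum (s := Finset.range (M+1))
              (by intro n hn; simp only [Finset.mem_range] at hn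
                  rw [if_neg (by omega)]; simp)]
            rw [← ENNReal.ofReal_sum_of_nonneg (by intro n _; positivity)]
            apply ENNReal.ofReal_le_ofReal
            have hc : ∀ n ∈ Finset.range (M+1), (if n ≤ M then a⁻¹ else 0) = a⁻¹ := by
              intro n hn; simp only [Finset.mem_range] at hn; rw [if_pos (by omega)]
            rw [Finset.sum_congr rfl hc, Finset.sum_const, Finset.card_range]
            simp [nsmul_eq_mul]
          · apply le_trans (tsum_ofReal_tele (g := fun n => ((max n M : ℕ):ℝ)⁻¹) ?_ ?_ ?_ ?_)
            · apply ENNReal.ofReal_le_ofReal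
              have : max 0 M = M := by omega
              rw [this]
            · intro n; positivity
            · rw [if_neg (by omega)]
            · intro n
              by_cases h : M ≤ n
              · have h1 : max n M = n := max_eq_left h
                have h2 : max (n+1) M = n+1 := max_eq_left (by omega)
                have hn1 : (1:ℝ) ≤ (n:ℝ) := by exact_mod_cast le_trans hM1 h
                rw [if_pos (by omega), h1, h2]
                push_cast
                rw [inv_sub_inv (by linarith) (by linarith)]
                have he : ((n:ℝ) + 1 - n) = 1 := by ring
                rw [he, div_eq_mul_inv, one_mul]
                apply inv_anti₀ (by nlinarith) (by nlinarith)
              · have h1 : max n M = M := max_eq_right (by omega)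
                have h2 : max (n+1) M = M := max_eq_right (by omega)
                rw [if_neg (by omega), h1, h2, sub_self]
            · intro n; positivity
      _ = ENNReal.ofReal (((M:ℝ)+1) * a⁻¹ + (M:ℝ)⁻¹) := by
          rw [ENNReal.ofReal_add (by positivity) (by positivity)]
      _ ≤ ENNReal.ofReal (4 / sa) := by
          apply ENNReal.ofReal_le_ofReal
          have hsp : (0:ℝ) < sa := by linarith
          have hne : sa ≠ 0 := by linarith
          have h1 : ((M:ℝ)+1) * a⁻¹ ≤ 2 / sa := by
            rw [div_eq_mul_inv, ← hsa2, sq, mul_inv, ← mul_assoc]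
            have hm2 : ((M:ℝ)+1) ≤ 2 * sa := by linarith
            calc ((M:ℝ)+1) * sa⁻¹ * sa⁻¹ ≤ 2 * sa * sa⁻¹ * sa⁻¹ := by gcongr
              _ = 2 * sa⁻¹ := by field_simp
          have h2 : (M:ℝ)⁻¹ ≤ 2 / sa := by
            rw [div_eq_mul_inv, show (2:ℝ) * sa⁻¹ = (sa/2)⁻¹ by rw [inv_div]; ring]
            apply inv_anti₀ (by linarith) hMge
          calc ((M:ℝ)+1) * a⁻¹ + (M:ℝ)⁻¹ ≤ 2/sa + 2/sa := add_le_add h1 h2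
            _ = 4 / sa := by ring
  rw [tsum_int_split]
  have h8 : ENNReal.ofReal (4/sa) + ENNReal.ofReal (4/sa) = ENNReal.ofReal (8/sa) := by
    rw [← ENNReal.ofReal_add (by positivity) (by positivity)]
    congr 1
    ring
  rw [← h8]
  refine add_le_add ?_ ?_
  · refine le_of_eq_of_le ?_ hA
    congr 1 with n
  · refine le_trans ?_ hA
    apply ENNReal.tsum_le_tsum
    intro n
    apply ENNReal.ofReal_le_ofReal
    apply inv_anti₀ (by nlinarith [sq_nonneg (n:ℝ), Nat.cast_nonneg (α := ℝ) n])
    push_cast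
    nlinarith [sq_nonneg (n:ℝ), Nat.cast_nonneg (α := ℝ) n]

lemma tailcube {M : ℕ} (hM : 1 ≤ M) :
    ∑' n : ℕ, ENNReal.ofReal (if M+1 ≤ n then (((n:ℝ))^3)⁻¹ else 0)
      ≤ ENNReal.ofReal ((2*(M:ℝ)^2)⁻¹) := by
  have hM1' : (1:ℝ) ≤ (M:ℝ) := by exact_mod_cast hM
  apply le_trans (tsum_ofReal_tele (g := fun n => (2*((max n M : ℕ):ℝ)^2)⁻¹) ?_ ?_ ?_ ?_)
  · apply ENNReal.ofReal_le_ofReal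
    have : max 0 M = M := by omega
    rw [this]
  · intro n; positivity
  · rw [if_neg (by omega)]
  · intro n
    by_cases h : M ≤ n
    · have h1 : max n M = n := max_eq_left h
      have h2 : max (n+1) M = n+1 := max_eq_left (by omega)
      have hn1 : (1:ℝ) ≤ (n:ℝ) := by exact_mod_cast le_trans hM h
      rw [if_pos (by omega), h1, h2]
      push_cast
      rw [inv_sub_inv (by positivity) (by positivity), le_div_iff₀ (by positivity),
        inv_mul_eq_div, div_le_iff₀ (by positivity)]
      nlinarith [sq_nonneg ((n:ℝ)+1), sq_nonneg (n:ℝ)]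
    · have h1 : max n M = M := max_eq_right (by omega)
      have h2 : max (n+1) M = M := max_eq_right (by omega)
      rw [if_neg (by omega), h1, h2, sub_self]
  · intro n; positivity

lemma oneD2 {a : ℝ} (ha : 1 ≤ a) :
    ∑' y : ℤ, ENNReal.ofReal (((a + (y:ℝ)^2)^2)⁻¹)
      ≤ ENNReal.ofReal (8 / (a * Real.sqrt a)) := by
  have ha0 : (0:ℝ) < a := by linarith
  calc ∑' y : ℤ, ENNReal.ofReal (((a + (y:ℝ)^2)^2)⁻¹)
      ≤ ∑' y : ℤ, ENNReal.ofReal (a⁻¹ * (a + (y:ℝ)^2)⁻¹) := by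
        apply ENNReal.tsum_le_tsum
        intro y
        apply ENNReal.ofReal_le_ofReal
        rw [sq, mul_inv]
        gcongr
        · nlinarith [sq_nonneg (y:ℝ)]
    _ = ENNReal.ofReal a⁻¹ * ∑' y : ℤ, ENNReal.ofReal ((a + (y:ℝ)^2)⁻¹) := by
        rw [← ENNReal.tsum_mul_left]
        congr 1 with y
        rw [ENNReal.ofReal_mul (by positivity)]
    _ ≤ ENNReal.ofReal a⁻¹ * ENNReal.ofReal (8 / Real.sqrt a) := by
        gcongr
        exact oneD ha
    _ = ENNReal.ofReal (8 / (a * Real.sqrt a)) := by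
        rw [← ENNReal.ofReal_mul (by positivity)]
        congr 1
        rw [div_eq_mul_inv, div_eq_mul_inv, mul_inv]
        ring

lemma latSq_nonneg {d : ℕ} (k : Fin d → ℤ) : 0 ≤ latSq k :=
  Finset.sum_nonneg fun i _ => sq_nonneg _

lemma cs_tsum {ι : Type*} (f g : ι → ℝ≥0∞) :
    ∑' i, f i * g i ≤ (∑' i, f i ^ (2:ℝ)) ^ (1/2:ℝ) * (∑' i, g i ^ (2:ℝ)) ^ (1/2:ℝ) := by
  have hpq : (2:ℝ).HolderConjugate 2 := Real.HolderConjugate.two_two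
  rw [ENNReal.tsum_eq_iSup_sum]
  refine iSup_le fun s => (ENNReal.inner_le_Lp_mul_Lq s f g hpq).trans ?_
  gcongr <;> [exact ENNReal.sum_le_tsum s; exact ENNReal.sum_le_tsum s]

lemma cs_subtype {d : ℕ} (s : ℝ) (a : (Fin d → ℤ) → ℂ) (S : Set (Fin d → ℤ)) :
    ∑' k : S, ENNReal.ofReal ‖a k.1‖ ≤
      (∑' k : S, (ENNReal.ofReal ((1 + latSq k.1) ^ s))⁻¹) ^ (1/2:ℝ) * ehnorm s a := by
  have hpos : ∀ k : Fin d → ℤ, (0:ℝ) < (1 + latSq k) ^ s := fun k =>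
    Real.rpow_pos_of_pos (by have := latSq_nonneg k; linarith) s
  set W : (Fin d → ℤ) → ℝ≥0∞ := fun k => ENNReal.ofReal ((1 + latSq k) ^ s) with hW
  have hW0 : ∀ k, W k ≠ 0 := fun k => by
    simp only [hW, ne_eq, ENNReal.ofReal_eq_zero, not_le]; exact hpos k
  have hWt : ∀ k, W k ≠ ⊤ := fun k => ENNReal.ofReal_ne_top
  have key : ∀ k : S, ENNReal.ofReal ‖a k.1‖
      = ((W k.1)⁻¹ ^ (1/2:ℝ)) * ((W k.1) ^ (1/2:ℝ) * ENNReal.ofReal ‖a k.1‖) := by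
    intro k
    rw [← mul_assoc, ← ENNReal.mul_rpow_of_nonneg _ _ (by norm_num : (0:ℝ) ≤ 1/2),
      ENNReal.inv_mul_cancel (hW0 k.1) (hWt k.1), ENNReal.one_rpow, one_mul]
  calc ∑' k : S, ENNReal.ofReal ‖a k.1‖
      = ∑' k : S, ((W k.1)⁻¹ ^ (1/2:ℝ)) * ((W k.1) ^ (1/2:ℝ) * ENNReal.ofReal ‖a k.1‖) :=
        tsum_congr key
    _ ≤ (∑' k : S, ((W k.1)⁻¹ ^ (1/2:ℝ)) ^ (2:ℝ)) ^ (1/2:ℝ)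
          * (∑' k : S, ((W k.1) ^ (1/2:ℝ) * ENNReal.ofReal ‖a k.1‖) ^ (2:ℝ)) ^ (1/2:ℝ) :=
        cs_tsum _ _
    _ ≤ _ := by
        gcongr ?_ * ?_
        · apply le_of_eq
          congr 1
          refine tsum_congr fun k => ?_
          rw [← ENNReal.rpow_mul]
          norm_num
          rfl
        · rw [ehnorm]
          apply ENNReal.rpow_le_rpow _ (by norm_num : (0:ℝ) ≤ 1/2)
          have hterm : ∀ k : S, ((W k.1) ^ (1/2:ℝ) * ENNReal.ofReal ‖a k.1‖) ^ (2:ℝ)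
              = ENNReal.ofReal ((1 + latSq k.1) ^ s * ‖a k.1‖ ^ 2) := by
            intro k
            have e1 : ((W k.1) ^ (1/2:ℝ)) ^ (2:ℝ) = W k.1 := by
              rw [← ENNReal.rpow_mul]; norm_num
            have e2 : (ENNReal.ofReal ‖a k.1‖) ^ (2:ℝ) = ENNReal.ofReal (‖a k.1‖^2) := by
              rw [show (2:ℝ) = ((2:ℕ):ℝ) by norm_num, ENNReal.rpow_natCast,
                ← ENNReal.ofReal_pow (norm_nonneg _)]
            rw [ENNReal.mul_rpow_of_nonneg _ _ (by norm_num : (0:ℝ) ≤ 2), e1, e2,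
              ← ENNReal.ofReal_mul (hpos k.1).le]
          rw [tsum_congr hterm]
          exact tsum_comp_le_tsum_of_injective Subtype.val_injective _

lemma tsum_two (F : (Fin 2 → ℤ) → ℝ≥0∞) :
    ∑' k, F k = ∑' x : ℤ, ∑' y : ℤ, F ((piFinTwoEquiv (fun _ => ℤ)).symm (x, y)) := by
  rw [← ((piFinTwoEquiv (fun _ => ℤ)).symm.tsum_eq F)]
  rw [show (fun c : ℤ × ℤ => F ((piFinTwoEquiv (fun _ => ℤ)).symm c))
      = fun c : ℤ × ℤ => (fun x y => F ((piFinTwoEquiv (fun _ => ℤ)).symm (x, y))) c.1 c.2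
    from rfl]
  exact ENNReal.tsum_prod (f := fun x y => F ((piFinTwoEquiv (fun _ => ℤ)).symm (x, y)))

lemma latSq_two (x y : ℤ) :
    latSq ((piFinTwoEquiv (fun _ => ℤ)).symm (x, y)) = (x:ℝ)^2 + (y:ℝ)^2 := by
  simp [latSq, Fin.sum_univ_two, piFinTwoEquiv]

lemma comp0 (x y : ℤ) : ((piFinTwoEquiv (fun _ => ℤ)).symm (x, y)) 0 = x := rfl
lemma comp1 (x y : ℤ) : ((piFinTwoEquiv (fun _ => ℤ)).symm (x, y)) 1 = y := rfl

lemma nat_le_floor_of_sq {x : ℝ} {n : ℕ} (hx : 0 ≤ x) (h : (n:ℝ)^2 ≤ x^2) : n ≤ ⌊x⌋₊ := by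
  apply Nat.le_floor
  nlinarith [Nat.cast_nonneg (α := ℝ) n]

lemma sqrt_one_add_sq_ge (n : ℕ) : max 1 (n:ℝ) ≤ Real.sqrt (1+(n:ℝ)^2) := by
  have hs := Real.sqrt_nonneg (1+(n:ℝ)^2)
  have hsq := Real.sq_sqrt (show (0:ℝ) ≤ 1+(n:ℝ)^2 by positivity)
  apply max_le
  · nlinarith
  · nlinarith [Nat.cast_nonneg (α := ℝ) n]

/-- one-sided (ℕ) outer sum bound for part (i) -/
lemma outer1_nat {R : ℝ} (hR : 2 ≤ R) (w : ℕ → ℝ≥0∞)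
    (hw : ∀ n : ℕ, w n ≤ ENNReal.ofReal
      (if n ≤ ⌊R⌋₊ then 8 / (max 1 (n:ℝ)) else 0)) :
    ∑' n : ℕ, w n ≤ ENNReal.ofReal (8 * (2 + Real.log R)) := by
  set N := ⌊R⌋₊ with hN
  have hN1 : 1 ≤ N := Nat.le_floor (by exact_mod_cast (by linarith : (1:ℝ) ≤ R))
  have hNR : (N:ℝ) ≤ R := Nat.floor_le (by linarith)
  calc ∑' n : ℕ, w n
      ≤ ∑' n : ℕ, ENNReal.ofReal (if n ≤ N then 8 / (max 1 (n:ℝ)) else 0) :=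
        ENNReal.tsum_le_tsum hw
    _ = ∑ n ∈ Finset.range (N+1), ENNReal.ofReal (if n ≤ N then 8 / (max 1 (n:ℝ)) else 0) := by
        apply tsum_eq_sum
        intro n hn
        simp only [Finset.mem_range] at hn
        rw [if_neg (by omega)]
        simp
    _ = ENNReal.ofReal (∑ n ∈ Finset.range (N+1), if n ≤ N then 8 / (max 1 (n:ℝ)) else 0) :=
        (ENNReal.ofReal_sum_of_nonneg (by intro n _; positivity)).symm
    _ ≤ ENNReal.ofReal (8 * (2 + Real.log R)) := by
        apply ENNReal.ofReal_le_ofReal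
        have hc : ∀ n ∈ Finset.range (N+1),
            (if n ≤ N then 8 / (max 1 (n:ℝ)) else 0) = 8 / (max 1 (n:ℝ)) := by
          intro n hn; simp only [Finset.mem_range] at hn; rw [if_pos (by omega)]
        rw [Finset.sum_congr rfl hc, Finset.sum_range_succ']
        have h0 : (8:ℝ) / (max 1 ((0:ℕ):ℝ)) = 8 := by norm_num
        rw [h0]
        have hstep : ∀ i : ℕ, (8:ℝ) / (max 1 ((i+1:ℕ):ℝ)) = 8 * ((i:ℝ)+1)⁻¹ := by
          intro i
          have : max 1 ((i+1:ℕ):ℝ) = ((i:ℝ)+1) := by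
            rw [max_eq_right]; push_cast; ring
            push_cast
            linarith [Nat.cast_nonneg (α := ℝ) i]
          rw [this, div_eq_mul_inv]
        rw [Finset.sum_congr rfl (fun i _ => hstep i), ← Finset.mul_sum]
        have hharm : ∑ i ∈ Finset.range N, ((i:ℝ)+1)⁻¹ = (harmonic N : ℝ) := by
          rw [harmonic]
          push_cast
          rfl
        rw [hharm]
        have hlog : (harmonic N : ℝ) ≤ 1 + Real.log N := harmonic_le_one_add_log N
        have hlogR : Real.log N ≤ Real.log R :=
          Real.log_le_log (by exact_mod_cast hN1) hNR
        nlinarith [Real.log_nonneg (by linarith : (1:ℝ) ≤ R)]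

lemma weight1 {R : ℝ} (hR : 2 ≤ R) :
    (∑' k : {k : Fin 2 → ℤ // Real.sqrt (latSq k) ≤ R},
        (ENNReal.ofReal ((1 + latSq k.1) ^ (1:ℝ)))⁻¹)
      ≤ ENNReal.ofReal (64 * Real.log R) := by
  have hR0 : (0:ℝ) < R := by linarith
  have hlog23 : (2/3:ℝ) ≤ Real.log R := by
    have h2 : Real.log 2 ≤ Real.log R := Real.log_le_log (by norm_num) hR
    have := Real.log_two_gt_d9
    linarith
  set S : Set (Fin 2 → ℤ) := {k | Real.sqrt (latSq k) ≤ R} with hS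
  have hterm : ∀ k : Fin 2 → ℤ,
      (ENNReal.ofReal ((1 + latSq k) ^ (1:ℝ)))⁻¹ = ENNReal.ofReal ((1 + latSq k)⁻¹) := by
    intro k
    rw [Real.rpow_one, ENNReal.ofReal_inv_of_pos (by nlinarith [latSq_nonneg k])]
  calc (∑' k : {k : Fin 2 → ℤ // Real.sqrt (latSq k) ≤ R},
        (ENNReal.ofReal ((1 + latSq k.1) ^ (1:ℝ)))⁻¹)
      = ∑' k : S, ENNReal.ofReal ((1 + latSq k.1)⁻¹) := tsum_congr (fun k => hterm k.1)
    _ = ∑' k, S.indicator (fun k => ENNReal.ofReal ((1 + latSq k)⁻¹)) k :=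
        by exact tsum_subtype S (fun k => ENNReal.ofReal ((1 + latSq k)⁻¹))
    _ ≤ ∑' k : Fin 2 → ℤ, ENNReal.ofReal
          (if ((k 0 : ℝ))^2 ≤ R^2 then (1 + latSq k)⁻¹ else 0) := by
        apply ENNReal.tsum_le_tsum
        intro k
        by_cases hk : k ∈ S
        · rw [Set.indicator_of_mem hk]
          have h1 : latSq k ≤ R^2 := by
            have := Real.sqrt_le_sqrt (latSq_nonneg k) -- dummy
            have h2 : Real.sqrt (latSq k) ≤ R := hk
            nlinarith [Real.sq_sqrt (latSq_nonneg k), Real.sqrt_nonneg (latSq k)]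
          have h0 : ((k 0 : ℝ))^2 ≤ latSq k := by
            rw [latSq, Fin.sum_univ_two]
            nlinarith [sq_nonneg ((k 1 : ℤ) : ℝ)]
          rw [if_pos (by linarith)]
        · rw [Set.indicator_of_notMem hk]
          exact zero_le
    _ = ∑' x : ℤ, ∑' y : ℤ, ENNReal.ofReal
          (if ((x:ℝ))^2 ≤ R^2 then (1 + ((x:ℝ)^2 + (y:ℝ)^2))⁻¹ else 0) := by
        rw [tsum_two]
        congr 1 with x
        congr 1 with y
        rw [latSq_two, comp0]
    _ ≤ ∑' x : ℤ, ENNReal.ofReal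
          (if ((x:ℝ))^2 ≤ R^2 then 8 / Real.sqrt (1 + (x:ℝ)^2) else 0) := by
        apply ENNReal.tsum_le_tsum
        intro x
        by_cases hc : ((x:ℝ))^2 ≤ R^2
        · simp only [if_pos hc]
          have ha : (1:ℝ) ≤ 1 + (x:ℝ)^2 := by nlinarith [sq_nonneg (x:ℝ)]
          refine le_trans (le_of_eq ?_) (oneD ha)
          congr 1 with y
          congr 2
          ring
        · simp only [if_neg hc]
          simp
    _ ≤ ENNReal.ofReal (8 * (2 + Real.log R)) + ENNReal.ofReal (8 * (2 + Real.log R)) := by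
        rw [tsum_int_split]
        refine add_le_add ?_ ?_
        · apply outer1_nat hR
          intro n
          by_cases hc : (((n:ℤ):ℝ))^2 ≤ R^2
          · rw [if_pos hc]
            have hn : n ≤ ⌊R⌋₊ := nat_le_floor_of_sq (by linarith) (by push_cast at hc ⊢; exact hc)
            rw [if_pos hn]
            apply ENNReal.ofReal_le_ofReal
            push_cast
            exact div_le_div_of_nonneg_left (by norm_num)
              (lt_of_lt_of_le one_pos (le_max_left _ _)) (sqrt_one_add_sq_ge n)
          · rw [if_neg hc]
            simp only [ENNReal.ofReal_zero]
            exact zero_le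
        · apply outer1_nat hR
          intro n
          by_cases hc : (((-(n+1):ℤ)):ℝ)^2 ≤ R^2
          · rw [if_pos hc]
            have hc' : (((n+1:ℕ)):ℝ)^2 ≤ R^2 := by push_cast at hc ⊢; nlinarith
            have hn : n+1 ≤ ⌊R⌋₊ := nat_le_floor_of_sq (by linarith) hc'
            rw [if_pos (by omega)]
            apply ENNReal.ofReal_le_ofReal
            have e1 : (((-(n+1):ℤ)):ℝ)^2 = (((n+1:ℕ)):ℝ)^2 := by push_cast; ring
            rw [e1]
            have hmm : max 1 ((n:ℕ):ℝ) ≤ Real.sqrt (1+(((n+1:ℕ)):ℝ)^2) := by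
              refine le_trans ?_ (sqrt_one_add_sq_ge (n+1))
              apply max_le (le_max_left _ _)
              apply le_max_of_le_right
              push_cast
              linarith [Nat.cast_nonneg (α := ℝ) n]
            exact div_le_div_of_nonneg_left (by norm_num)
              (lt_of_lt_of_le one_pos (le_max_left _ _)) hmm
          · rw [if_neg hc]
            simp only [ENNReal.ofReal_zero]
            exact zero_le
    _ ≤ ENNReal.ofReal (64 * Real.log R) := by
        rw [← ENNReal.ofReal_add (by nlinarith) (by nlinarith)]
        apply ENNReal.ofReal_le_ofReal
        nlinarith

lemma tailsum_le {R : ℝ} (hR : 2 ≤ R) :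
    ∑' n : ℕ, ENNReal.ofReal (if ⌊R/2⌋₊+1 ≤ n then 8*((n:ℝ)^3)⁻¹ else 0)
      ≤ ENNReal.ofReal (64 / R^2) := by
  have hR0 : (0:ℝ) < R := by linarith
  set M := ⌊R/2⌋₊ with hM
  have hM1 : 1 ≤ M := Nat.le_floor (by exact_mod_cast (by linarith : (1:ℝ) ≤ R/2))
  have hMge : R/4 ≤ (M:ℝ) := by
    have := nat_floor_half (show (1:ℝ) ≤ R/2 by linarith)
    linarith
  calc ∑' n : ℕ, ENNReal.ofReal (if M+1 ≤ n then 8*((n:ℝ)^3)⁻¹ else 0)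
      = ENNReal.ofReal 8 * ∑' n : ℕ, ENNReal.ofReal (if M+1 ≤ n then ((n:ℝ)^3)⁻¹ else 0) := by
        rw [← ENNReal.tsum_mul_left]
        refine tsum_congr fun n => ?_
        by_cases h : M+1 ≤ n
        · rw [if_pos h, if_pos h, ← ENNReal.ofReal_mul (by norm_num)]
        · rw [if_neg h, if_neg h]
          simp
    _ ≤ ENNReal.ofReal 8 * ENNReal.ofReal ((2*(M:ℝ)^2)⁻¹) := by
        gcongr
        exact tailcube hM1
    _ = ENNReal.ofReal (8 * (2*(M:ℝ)^2)⁻¹) := by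
        rw [← ENNReal.ofReal_mul (by norm_num)]
    _ ≤ ENNReal.ofReal (64 / R^2) := by
        apply ENNReal.ofReal_le_ofReal
        have hMp : (0:ℝ) < (M:ℝ) := by linarith
        rw [show (8:ℝ) * (2*(M:ℝ)^2)⁻¹ = 4 / (M:ℝ)^2 by field_simp; ring,
          div_le_div_iff₀ (by positivity) (by positivity)]
        nlinarith

lemma coord_bound {R : ℝ} (hR : 2 ≤ R) :
    ∑' x : ℤ, ENNReal.ofReal
        (if R^2 < 2*((x:ℝ))^2 then 8 / ((1+(x:ℝ)^2) * Real.sqrt (1+(x:ℝ)^2)) else 0)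
      ≤ ENNReal.ofReal (64 / R^2) + ENNReal.ofReal (64 / R^2) := by
  have hR0 : (0:ℝ) < R := by linarith
  set M := ⌊R/2⌋₊ with hM
  have hMle : (M:ℝ) ≤ R/2 := Nat.floor_le (by linarith)
  -- pointwise bound as function of natAbs
  have hkey : ∀ n : ℕ, (R^2 < 2*((n:ℝ))^2 →
      ENNReal.ofReal (8 / ((1+(n:ℝ)^2) * Real.sqrt (1+(n:ℝ)^2)))
        ≤ ENNReal.ofReal (if M+1 ≤ n then 8*((n:ℝ)^3)⁻¹ else 0)) := by
    intro n hc
    have hn1 : (1:ℝ) ≤ (n:ℝ) := by nlinarith [Nat.cast_nonneg (α := ℝ) n]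
    have hnM : M+1 ≤ n := by
      have : (M:ℝ) < (n:ℝ) := by nlinarith
      exact_mod_cast Nat.add_one_le_iff.mpr (by exact_mod_cast this)
    rw [if_pos hnM]
    apply ENNReal.ofReal_le_ofReal
    rw [show (8:ℝ)*((n:ℝ)^3)⁻¹ = 8 / (n:ℝ)^3 by rw [div_eq_mul_inv]]
    apply div_le_div_of_nonneg_left (by norm_num) (by positivity)
    have hs : (n:ℝ) ≤ Real.sqrt (1+(n:ℝ)^2) :=
      le_trans (le_max_right _ _) (sqrt_one_add_sq_ge n)
    nlinarith [Real.sqrt_nonneg (1+(n:ℝ)^2)]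
  rw [tsum_int_split]
  refine add_le_add ?_ ?_
  · refine le_trans ?_ (tailsum_le hR)
    apply ENNReal.tsum_le_tsum
    intro n
    by_cases hc : R^2 < 2*(((n:ℤ):ℝ))^2
    · rw [if_pos hc]
      push_cast at hc ⊢
      exact hkey n hc
    · rw [if_neg hc]
      simp only [ENNReal.ofReal_zero]
      exact zero_le
  · refine le_trans ?_ (le_trans (tsum_comp_le_tsum_of_injective
      (add_left_injective 1) (fun n => ENNReal.ofReal (if M+1 ≤ n then 8*((n:ℝ)^3)⁻¹ else 0)))
      (tailsum_le hR))
    apply ENNReal.tsum_le_tsum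
    intro n
    by_cases hc : R^2 < 2*(((-(n+1):ℤ)):ℝ)^2
    · rw [if_pos hc]
      have e1 : (((-(n+1):ℤ)):ℝ)^2 = (((n+1:ℕ)):ℝ)^2 := by push_cast; ring
      rw [e1]
      have hc' : R^2 < 2*(((n+1:ℕ)):ℝ)^2 := by rw [← e1]; exact hc
      exact hkey (n+1) hc'
    · rw [if_neg hc]
      simp only [ENNReal.ofReal_zero]
      exact zero_le

lemma weight2 {R : ℝ} (hR : 2 ≤ R) :
    (∑' k : {k : Fin 2 → ℤ // R < Real.sqrt (latSq k)},
        (ENNReal.ofReal ((1 + latSq k.1) ^ (2:ℝ)))⁻¹)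
      ≤ ENNReal.ofReal (256 / R^2) := by
  have hR0 : (0:ℝ) < R := by linarith
  set S : Set (Fin 2 → ℤ) := {k | R < Real.sqrt (latSq k)} with hS
  have hterm : ∀ k : Fin 2 → ℤ,
      (ENNReal.ofReal ((1 + latSq k) ^ (2:ℝ)))⁻¹
        = ENNReal.ofReal (((1 + latSq k)^2)⁻¹) := by
    intro k
    rw [show ((2:ℝ)) = ((2:ℕ):ℝ) by norm_num, Real.rpow_natCast,
      ENNReal.ofReal_inv_of_pos (by nlinarith [latSq_nonneg k])]
  have hsplit : ∀ k : Fin 2 → ℤ,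
      S.indicator (fun k => ENNReal.ofReal (((1 + latSq k)^2)⁻¹)) k
        ≤ ENNReal.ofReal (if R^2 < 2*((k 0 : ℝ))^2 then ((1 + latSq k)^2)⁻¹ else 0)
          + ENNReal.ofReal (if R^2 < 2*((k 1 : ℝ))^2 then ((1 + latSq k)^2)⁻¹ else 0) := by
    intro k
    by_cases hk : k ∈ S
    · rw [Set.indicator_of_mem hk]
      have h1 : R^2 < latSq k := by
        have h2 : R < Real.sqrt (latSq k) := hk
        nlinarith [Real.sq_sqrt (latSq_nonneg k), Real.sqrt_nonneg (latSq k)]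
      have hdec : R^2 < 2*((k 0 : ℝ))^2 ∨ R^2 < 2*((k 1 : ℝ))^2 := by
        by_contra hcon
        push_neg at hcon
        rw [latSq, Fin.sum_univ_two] at h1
        nlinarith [hcon.1, hcon.2]
      rcases hdec with h | h
      · rw [if_pos h]
        exact le_add_of_le_of_nonneg le_rfl (zero_le)
      · rw [if_pos h]
        exact le_add_of_nonneg_of_le (zero_le) le_rfl
    · rw [Set.indicator_of_notMem hk]
      exact zero_le
  have hinner : ∀ x : ℤ, ∑' y : ℤ, ENNReal.ofReal
        (if R^2 < 2*((x:ℝ))^2 then ((1 + ((x:ℝ)^2+(y:ℝ)^2))^2)⁻¹ else 0)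
          ≤ ENNReal.ofReal
            (if R^2 < 2*((x:ℝ))^2 then 8 / ((1+(x:ℝ)^2) * Real.sqrt (1+(x:ℝ)^2)) else 0) := by
      intro x
      by_cases hc : R^2 < 2*((x:ℝ))^2
      · simp only [if_pos hc]
        have ha : (1:ℝ) ≤ 1 + (x:ℝ)^2 := by nlinarith [sq_nonneg (x:ℝ)]
        refine le_trans (le_of_eq (tsum_congr fun y => ?_)) (oneD2 ha)
        rw [show (1+((x:ℝ)^2+(y:ℝ)^2)) = ((1+(x:ℝ)^2) + (y:ℝ)^2) from by ring]
      · simp only [if_neg hc]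
        simp
  have hcol0 : ∑' k : Fin 2 → ℤ, ENNReal.ofReal
      (if R^2 < 2*((k 0 : ℝ))^2 then ((1 + latSq k)^2)⁻¹ else 0)
        ≤ ENNReal.ofReal (64 / R^2) + ENNReal.ofReal (64 / R^2) := by
    calc ∑' k : Fin 2 → ℤ, ENNReal.ofReal
          (if R^2 < 2*((k 0 : ℝ))^2 then ((1 + latSq k)^2)⁻¹ else 0)
          = ∑' x : ℤ, ∑' y : ℤ, ENNReal.ofReal
            (if R^2 < 2*((x:ℝ))^2 then ((1 + ((x:ℝ)^2+(y:ℝ)^2))^2)⁻¹ else 0) := by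
            rw [tsum_two]
            congr 1 with x
            congr 1 with y
            rw [latSq_two, comp0]
        _ ≤ ∑' x : ℤ, ENNReal.ofReal
            (if R^2 < 2*((x:ℝ))^2 then 8 / ((1+(x:ℝ)^2) * Real.sqrt (1+(x:ℝ)^2)) else 0) :=
            ENNReal.tsum_le_tsum hinner
        _ ≤ _ := coord_bound hR
  have hcol1 : ∑' k : Fin 2 → ℤ, ENNReal.ofReal
      (if R^2 < 2*((k 1 : ℝ))^2 then ((1 + latSq k)^2)⁻¹ else 0)
        ≤ ENNReal.ofReal (64 / R^2) + ENNReal.ofReal (64 / R^2) := by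
    calc ∑' k : Fin 2 → ℤ, ENNReal.ofReal
          (if R^2 < 2*((k 1 : ℝ))^2 then ((1 + latSq k)^2)⁻¹ else 0)
          = ∑' x : ℤ, ∑' y : ℤ, ENNReal.ofReal
            (if R^2 < 2*((y:ℝ))^2 then ((1 + ((x:ℝ)^2+(y:ℝ)^2))^2)⁻¹ else 0) := by
            rw [tsum_two]
            congr 1 with x
            congr 1 with y
            rw [latSq_two, comp1]
        _ = ∑' y : ℤ, ∑' x : ℤ, ENNReal.ofReal
            (if R^2 < 2*((y:ℝ))^2 then ((1 + ((x:ℝ)^2+(y:ℝ)^2))^2)⁻¹ else 0) :=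
            ENNReal.tsum_comm
        _ ≤ ∑' y : ℤ, ENNReal.ofReal
            (if R^2 < 2*((y:ℝ))^2 then 8 / ((1+(y:ℝ)^2) * Real.sqrt (1+(y:ℝ)^2)) else 0) := by
            apply ENNReal.tsum_le_tsum
            intro y
            refine le_trans (le_of_eq (tsum_congr fun x => ?_)) (hinner y)
            rw [show ((x:ℝ)^2+(y:ℝ)^2) = ((y:ℝ)^2+(x:ℝ)^2) from by ring]
        _ ≤ _ := coord_bound hR
  calc (∑' k : {k : Fin 2 → ℤ // R < Real.sqrt (latSq k)},
        (ENNReal.ofReal ((1 + latSq k.1) ^ (2:ℝ)))⁻¹)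
      = ∑' k : S, ENNReal.ofReal (((1 + latSq k.1)^2)⁻¹) := tsum_congr (fun k => hterm k.1)
    _ = ∑' k, S.indicator (fun k => ENNReal.ofReal (((1 + latSq k)^2)⁻¹)) k := by
        exact tsum_subtype S (fun k => ENNReal.ofReal (((1 + latSq k)^2)⁻¹))
    _ ≤ ∑' k : Fin 2 → ℤ, (ENNReal.ofReal (if R^2 < 2*((k 0 : ℝ))^2 then ((1 + latSq k)^2)⁻¹ else 0)
          + ENNReal.ofReal (if R^2 < 2*((k 1 : ℝ))^2 then ((1 + latSq k)^2)⁻¹ else 0)) :=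
        ENNReal.tsum_le_tsum hsplit
    _ = (∑' k : Fin 2 → ℤ, ENNReal.ofReal (if R^2 < 2*((k 0 : ℝ))^2 then ((1 + latSq k)^2)⁻¹ else 0))
          + ∑' k : Fin 2 → ℤ, ENNReal.ofReal (if R^2 < 2*((k 1 : ℝ))^2 then ((1 + latSq k)^2)⁻¹ else 0) :=
        ENNReal.tsum_add
    _ ≤ (ENNReal.ofReal (64 / R^2) + ENNReal.ofReal (64 / R^2))
          + (ENNReal.ofReal (64 / R^2) + ENNReal.ofReal (64 / R^2)) :=
        add_le_add hcol0 hcol1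
    _ = ENNReal.ofReal (256 / R^2) := by
        rw [← ENNReal.ofReal_add (by positivity) (by positivity),
          ← ENNReal.ofReal_add (by positivity) (by positivity)]
        congr 1
        ring

/-- **Frequency-splitting estimates on `ℤ²`.** There is an absolute constant
`C > 0` such that for every `a : ℤ² → ℂ` and every `R ≥ 2`:
(i) `Σ_{|k| ≤ R} |a(k)| ≤ C √(log R) ‖a‖_{h¹}` and
(ii) `Σ_{|k| > R} |a(k)| ≤ C R⁻¹ ‖a‖_{h²}`. -/
theorem frequency_splitting :
    ∃ C : ℝ, 0 < C ∧ ∀ (a : (Fin 2 → ℤ) → ℂ) (R : ℝ), 2 ≤ R →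
      (∑' k : {k : Fin 2 → ℤ // Real.sqrt (latSq k) ≤ R}, ENNReal.ofReal ‖a k.1‖)
        ≤ ENNReal.ofReal (C * Real.sqrt (Real.log R)) * ehnorm 1 a ∧
      (∑' k : {k : Fin 2 → ℤ // R < Real.sqrt (latSq k)}, ENNReal.ofReal ‖a k.1‖)
        ≤ ENNReal.ofReal (C * R⁻¹) * ehnorm 2 a := by
  refine ⟨16, by norm_num, ?_⟩
  intro a R hR
  have hR0 : (0:ℝ) < R := by linarith
  have hlognn : (0:ℝ) ≤ Real.log R := Real.log_nonneg (by linarith)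
  constructor
  · refine le_trans (cs_subtype 1 a {k | Real.sqrt (latSq k) ≤ R}) ?_
    gcongr
    refine le_trans (ENNReal.rpow_le_rpow (weight1 hR) (by norm_num : (0:ℝ) ≤ 1/2)) ?_
    rw [ENNReal.ofReal_rpow_of_nonneg (by positivity) (by norm_num : (0:ℝ) ≤ 1/2)]
    apply ENNReal.ofReal_le_ofReal
    rw [← Real.sqrt_eq_rpow, show (64:ℝ) * Real.log R = 8^2 * Real.log R by norm_num,
      Real.sqrt_mul (by positivity), Real.sqrt_sq (by norm_num : (0:ℝ) ≤ 8)]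
    nlinarith [Real.sqrt_nonneg (Real.log R)]
  · refine le_trans (cs_subtype 2 a {k | R < Real.sqrt (latSq k)}) ?_
    gcongr
    refine le_trans (ENNReal.rpow_le_rpow (weight2 hR) (by norm_num : (0:ℝ) ≤ 1/2)) ?_
    rw [ENNReal.ofReal_rpow_of_nonneg (by positivity) (by norm_num : (0:ℝ) ≤ 1/2)]
    apply ENNReal.ofReal_le_ofReal
    rw [← Real.sqrt_eq_rpow, show (256:ℝ) / R^2 = (16/R)^2 by field_simp; norm_num,
      Real.sqrt_sq (by positivity)]
    rw [div_eq_mul_inv]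
end
end

section
/- (Logarithmic Gronwall lemma, Lemma 3.7 of the paper, with the comparison constant made precise.) Let C₁ ≥ e and C₂ ≥ 1 be real numbers. Let θ : [0,∞) → ℝ be continuous with θ(t) ≥ 1 for all t ≥ 0, and suppose that θ(t) ≤ C₁ + C₂ ∫₀ᵗ θ(s) log(1 + θ(s)) ds for all t ≥ 0. Define h(t) := C₁ + C₂ ∫₀ᵗ θ(s) log(1 + θ(s)) ds. Then for all t ≥ 0 one has θ(t) ≤ h(t) ≤ exp( log(1 + h(0)) · e^{C₂ t} ) − 1, where h(0) = C₁. -/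
open MeasureTheory intervalIntegral

/-- **Logarithmic Gronwall lemma** (Lemma 3.7 of Gubinelli–Ugurcan–Zachhuber).
If `θ ≥ 1` is continuous on `[0,∞)` and satisfies
`θ(t) ≤ C₁ + C₂ ∫₀ᵗ θ(s) log(1+θ(s)) ds` with `C₁ ≥ e`, `C₂ ≥ 1`, then setting
`h(t) := C₁ + C₂ ∫₀ᵗ θ(s) log(1+θ(s)) ds` (so that `h(0) = C₁`) one has
`θ(t) ≤ h(t) ≤ exp(log(1+h(0)) · e^{C₂ t}) − 1` for all `t ≥ 0`. -/
theorem log_gronwall (C₁ C₂ : ℝ) (hC₁ : Real.exp 1 ≤ C₁) (hC₂ : 1 ≤ C₂)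
    (θ : ℝ → ℝ) (hcont : ContinuousOn θ (Set.Ici (0 : ℝ)))
    (hθ : ∀ t, 0 ≤ t → 1 ≤ θ t)
    (hineq : ∀ t, 0 ≤ t →
      θ t ≤ C₁ + C₂ * ∫ s in (0:ℝ)..t, θ s * Real.log (1 + θ s)) :
    ∀ t, 0 ≤ t →
      θ t ≤ C₁ + C₂ * (∫ s in (0:ℝ)..t, θ s * Real.log (1 + θ s)) ∧
      C₁ + C₂ * (∫ s in (0:ℝ)..t, θ s * Real.log (1 + θ s)) ≤
        Real.exp (Real.log (1 + C₁) * Real.exp (C₂ * t)) - 1 := by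
  have hC₁1 : (1:ℝ) ≤ C₁ := le_trans (by nlinarith [Real.add_one_le_exp (1:ℝ)]) hC₁
  -- extended θ
  set θ' : ℝ → ℝ := fun t => θ (max t 0) with hθ'def
  have hθ'cont : Continuous θ' :=
    hcont.comp_continuous (continuous_id.max continuous_const) (fun x => le_max_right x 0)
  have hθ'1 : ∀ t, 1 ≤ θ' t := fun t => hθ _ (le_max_right t 0)
  set F : ℝ → ℝ := fun t => θ' t * Real.log (1 + θ' t) with hFdef
  have hFcont : Continuous F :=
    hθ'cont.mul (((continuous_const.add hθ'cont)).log (fun t => (by nlinarith [hθ'1 t] : (1:ℝ) + θ' t ≠ 0)))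
  have hFnonneg : ∀ t, 0 ≤ F t := fun t =>
    mul_nonneg (by linarith [hθ'1 t]) (Real.log_nonneg (by linarith [hθ'1 t]))
  set h : ℝ → ℝ := fun t => C₁ + C₂ * ∫ s in (0:ℝ)..t, F s with hhdef
  have hint_eq : ∀ t, 0 ≤ t →
      (∫ s in (0:ℝ)..t, θ s * Real.log (1 + θ s)) = ∫ s in (0:ℝ)..t, F s := by
    intro t ht
    refine intervalIntegral.integral_congr fun s hs => ?_
    rw [Set.uIcc_of_le ht] at hs
    have hm : max s 0 = s := max_eq_left hs.1
    simp only [hFdef, hθ'def, hm]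
  have hh' : ∀ t, HasDerivAt h (C₂ * F t) t := by
    intro t
    have := intervalIntegral.integral_hasDerivAt_right
      (hFcont.intervalIntegrable 0 t)
      (hFcont.aestronglyMeasurable.stronglyMeasurableAtFilter)
      hFcont.continuousAt
    exact (this.const_mul C₂).const_add C₁
  have hlb : ∀ t, 0 ≤ t → C₁ ≤ h t := by
    intro t ht
    have : 0 ≤ ∫ s in (0:ℝ)..t, F s :=
      intervalIntegral.integral_nonneg ht (fun u _ => hFnonneg u)
    have hC₂0 : (0:ℝ) ≤ C₂ := by linarith
    simp only [hhdef]; nlinarith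
  have hθh : ∀ t, 0 ≤ t → θ' t ≤ h t := by
    intro t ht
    have hm : max t 0 = t := max_eq_left ht
    have := hineq t ht
    rw [hint_eq t ht] at this
    simpa only [hθ'def, hm] using this
  -- g = log (1 + h)
  set g : ℝ → ℝ := fun t => Real.log (1 + h t) with hgdef
  intro t ht
  refine ⟨hineq t ht, ?_⟩
  have hg' : ∀ s, 0 ≤ s → HasDerivAt g (C₂ * F s / (1 + h s)) s := by
    intro s hs
    have hpos : (1:ℝ) + h s ≠ 0 := by have := hlb s hs; nlinarith
    simpa using (HasDerivAt.log ((hh' s).const_add 1) hpos)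
  have key : ∀ x ∈ Set.Icc (0:ℝ) t, ‖g x‖ ≤ gronwallBound (Real.log (1 + C₁)) C₂ 0 (x - 0) := by
    apply norm_le_gronwallBound_of_norm_deriv_right_le
      (f' := fun s => C₂ * F s / (1 + h s))
    · exact fun x hx => ((hg' x hx.1).continuousAt).continuousWithinAt
    · exact fun x hx => (hg' x hx.1).hasDerivWithinAt
    · have : h 0 = C₁ := by simp [hhdef]
      simp only [hgdef, this, Real.norm_eq_abs]
      rw [abs_of_nonneg (Real.log_nonneg (by linarith))]
    · intro x hx
      have hx0 : 0 ≤ x := hx.1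
      have hhx : C₁ ≤ h x := hlb x hx0
      have h1p : (0:ℝ) < 1 + h x := by linarith
      have hθx : θ' x ≤ h x := hθh x hx0
      have hFle : F x ≤ h x * Real.log (1 + h x) := by
        apply mul_le_mul hθx (Real.log_le_log (by linarith [hθ'1 x]) (by linarith))
          (Real.log_nonneg (by linarith [hθ'1 x])) (by linarith)
      have hgx0 : 0 ≤ g x := Real.log_nonneg (by linarith)
      have hd0 : 0 ≤ C₂ * F x / (1 + h x) :=
        div_nonneg (mul_nonneg (by linarith) (hFnonneg x)) h1p.le
      rw [Real.norm_eq_abs, Real.norm_eq_abs, abs_of_nonneg hd0, abs_of_nonneg hgx0]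
      have hL : 0 ≤ Real.log (1 + h x) := Real.log_nonneg (by linarith)
      have h1 : C₂ * F x / (1 + h x) ≤ C₂ * (h x * Real.log (1 + h x)) / (1 + h x) := by
        gcongr
      have h2 : C₂ * (h x * Real.log (1 + h x)) / (1 + h x) ≤ C₂ * Real.log (1 + h x) := by
        rw [div_le_iff₀ h1p]
        nlinarith
      simp only [hgdef]
      linarith
  have := key t ⟨ht, le_refl t⟩
  rw [gronwallBound_ε0, Real.norm_eq_abs, sub_zero] at this
  have hglog : Real.log (1 + h t) ≤ Real.log (1 + C₁) * Real.exp (C₂ * t) :=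
    le_trans (le_abs_self _) this
  have h1p : (0:ℝ) < 1 + h t := by have := hlb t ht; nlinarith
  have hfin : 1 + h t ≤ Real.exp (Real.log (1 + C₁) * Real.exp (C₂ * t)) := by
    calc 1 + h t = Real.exp (Real.log (1 + h t)) := (Real.exp_log h1p).symm
    _ ≤ _ := Real.exp_le_exp.2 hglog
  rw [hint_eq t ht]
  simp only [hhdef] at hfin ⊢
  linarith
end

section
/- (Differentiability of the cubic nonlinearity, Lemma 3.8 of the paper, in the form established by its proof.) Let (X, μ) be a measure space and T > 0. Let v : [0,T] → L²(μ; ℂ) be continuously differentiable as a curve in L²(μ; ℂ), with derivative v'. Assume in addition that v(t) ∈ L^∞(μ) for every t ∈ [0,T] and that t ↦ v(t) is continuous as a map from [0,T] into L^∞(μ). Then the map F : [0,T] → L²(μ; ℂ) defined pointwise by F(t) := |v(t)|² v(t) is continuously differentiable, with derivative F'(t) = v(t)² · conj(v'(t)) + 2 |v(t)|² · v'(t). -/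
open MeasureTheory Filter
section aux
variable {X : Type*} [MeasurableSpace X] {μ : Measure X}

lemma memLp_mulI2 (g : Lp ℂ ⊤ μ) (u : Lp ℂ 2 μ) :
    MemLp (fun x => (g : X → ℂ) x * (u : X → ℂ) x) 2 μ := by
  simpa [Pi.smul_apply', smul_eq_mul, Pi.mul_def] using
    (Lp.memLp u).smul (r := 2) (Lp.memLp g)

noncomputable def mulI2 (g : Lp ℂ ⊤ μ) (u : Lp ℂ 2 μ) : Lp ℂ 2 μ :=
  (memLp_mulI2 g u).toLp _

lemma coeFn_mulI2 (g : Lp ℂ ⊤ μ) (u : Lp ℂ 2 μ) :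
    (mulI2 g u : X → ℂ) =ᵐ[μ] fun x => (g : X → ℂ) x * (u : X → ℂ) x :=
  MemLp.coeFn_toLp _

lemma norm_mulI2_le (g : Lp ℂ ⊤ μ) (u : Lp ℂ 2 μ) : ‖mulI2 g u‖ ≤ ‖g‖ * ‖u‖ := by
  rw [mulI2, Lp.norm_toLp, Lp.norm_def, Lp.norm_def, ← ENNReal.toReal_mul]
  refine ENNReal.toReal_mono (ENNReal.mul_ne_top (Lp.eLpNorm_ne_top g) (Lp.eLpNorm_ne_top u)) ?_
  simpa [Pi.smul_apply', smul_eq_mul, Pi.mul_def] using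
    eLpNorm_smul_le_eLpNorm_top_mul_eLpNorm 2 (Lp.aestronglyMeasurable u) (g : X → ℂ)

lemma memLp_mulI (g h : Lp ℂ ⊤ μ) :
    MemLp (fun x => (g : X → ℂ) x * (h : X → ℂ) x) ⊤ μ := by
  simpa [Pi.smul_apply', smul_eq_mul, Pi.mul_def] using
    (Lp.memLp h).smul (r := ⊤) (Lp.memLp g)

noncomputable def mulI (g h : Lp ℂ ⊤ μ) : Lp ℂ ⊤ μ :=
  (memLp_mulI g h).toLp _

lemma coeFn_mulI (g h : Lp ℂ ⊤ μ) :
    (mulI g h : X → ℂ) =ᵐ[μ] fun x => (g : X → ℂ) x * (h : X → ℂ) x :=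
  MemLp.coeFn_toLp _

lemma norm_mulI_le (g h : Lp ℂ ⊤ μ) : ‖mulI g h‖ ≤ ‖g‖ * ‖h‖ := by
  rw [mulI, Lp.norm_toLp, Lp.norm_def, Lp.norm_def, ← ENNReal.toReal_mul]
  refine ENNReal.toReal_mono (ENNReal.mul_ne_top (Lp.eLpNorm_ne_top g) (Lp.eLpNorm_ne_top h)) ?_
  simpa [Pi.smul_apply', smul_eq_mul, Pi.mul_def] using
    eLpNorm_smul_le_eLpNorm_top_mul_eLpNorm ⊤ (Lp.aestronglyMeasurable h) (g : X → ℂ)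

lemma memLp_conj {p : ENNReal} (u : Lp ℂ p μ) :
    MemLp (fun x => (starRingEnd ℂ) ((u : X → ℂ) x)) p μ := by
  refine ⟨Complex.continuous_conj.comp_aestronglyMeasurable (Lp.aestronglyMeasurable u), ?_⟩
  have : (fun x => (starRingEnd ℂ) ((u : X → ℂ) x)) = (starRingEnd (X → ℂ)) (u : X → ℂ) := rfl
  rw [this, eLpNorm_conj]
  exact Lp.eLpNorm_lt_top u

noncomputable def conjLp {p : ENNReal} (u : Lp ℂ p μ) : Lp ℂ p μ :=
  (memLp_conj u).toLp _

lemma coeFn_conjLp {p : ENNReal} (u : Lp ℂ p μ) :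
    (conjLp u : X → ℂ) =ᵐ[μ] fun x => (starRingEnd ℂ) ((u : X → ℂ) x) :=
  MemLp.coeFn_toLp _

lemma norm_conjLp {p : ENNReal} (u : Lp ℂ p μ) : ‖conjLp u‖ = ‖u‖ := by
  rw [conjLp, Lp.norm_toLp, Lp.norm_def]
  congr 1
  have : (fun x => (starRingEnd ℂ) ((u : X → ℂ) x)) = (starRingEnd (X → ℂ)) (u : X → ℂ) := rfl
  rw [this, eLpNorm_conj]

lemma mulI2_sub_sub (g g' : Lp ℂ ⊤ μ) (u u' : Lp ℂ 2 μ) :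
    mulI2 g u - mulI2 g' u' = mulI2 (g - g') u + mulI2 g' (u - u') := by
  apply Lp.ext
  filter_upwards [coeFn_mulI2 g u, coeFn_mulI2 g' u', coeFn_mulI2 (g - g') u,
    coeFn_mulI2 g' (u - u'), Lp.coeFn_sub g g', Lp.coeFn_sub u u',
    Lp.coeFn_sub (mulI2 g u) (mulI2 g' u'),
    Lp.coeFn_add (mulI2 (g - g') u) (mulI2 g' (u - u'))] with x h1 h2 h3 h4 h5 h6 h7 h8
  rw [Pi.sub_apply] at h7
  rw [h7, h8, Pi.add_apply, h1, h2, h3, h4, h5, h6]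
  simp only [Pi.sub_apply]
  ring

lemma mulI_sub_sub (g g' h h' : Lp ℂ ⊤ μ) :
    mulI g h - mulI g' h' = mulI (g - g') h + mulI g' (h - h') := by
  apply Lp.ext
  filter_upwards [coeFn_mulI g h, coeFn_mulI g' h', coeFn_mulI (g - g') h,
    coeFn_mulI g' (h - h'), Lp.coeFn_sub g g', Lp.coeFn_sub h h',
    Lp.coeFn_sub (mulI g h) (mulI g' h'),
    Lp.coeFn_add (mulI (g - g') h) (mulI g' (h - h'))] with x h1 h2 h3 h4 h5 h6 h7 h8
  rw [Pi.sub_apply] at h7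
  rw [h7, h8, Pi.add_apply, h1, h2, h3, h4, h5, h6]
  simp only [Pi.sub_apply]
  ring

lemma conjLp_sub {p : ENNReal} (u u' : Lp ℂ p μ) :
    conjLp u - conjLp u' = conjLp (u - u') := by
  apply Lp.ext
  filter_upwards [coeFn_conjLp u, coeFn_conjLp u', coeFn_conjLp (u - u'),
    Lp.coeFn_sub u u', Lp.coeFn_sub (conjLp u) (conjLp u')] with x h1 h2 h3 h4 h5
  rw [Pi.sub_apply] at h5
  rw [h5, h1, h2, h3, h4]
  simp only [Pi.sub_apply, map_sub]

lemma norm_mulI_diff_le (g g' : Lp ℂ ⊤ μ) :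
    ‖mulI g g - mulI g' g'‖ ≤ ‖g - g'‖ * ‖g‖ + ‖g'‖ * ‖g - g'‖ := by
  rw [mulI_sub_sub]
  refine (norm_add_le _ _).trans (add_le_add (norm_mulI_le _ _) ?_)
  exact (norm_mulI_le _ _).trans le_rfl

lemma norm_mulI_conj_diff_le (g g' : Lp ℂ ⊤ μ) :
    ‖mulI (conjLp g) g - mulI (conjLp g') g'‖ ≤ ‖g - g'‖ * ‖g‖ + ‖g'‖ * ‖g - g'‖ := by
  rw [mulI_sub_sub, conjLp_sub]
  refine (norm_add_le _ _).trans (add_le_add ?_ ?_)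
  · exact (norm_mulI_le _ _).trans (by rw [norm_conjLp])
  · exact (norm_mulI_le _ _).trans (by rw [norm_conjLp])
end aux
set_option maxHeartbeats 2000000 in
/-- **Differentiability of the cubic nonlinearity** (Lemma 3.8 of
Gubinelli–Ugurcan–Zachhuber). Let `v : [0,T] → L²(μ;ℂ)` be continuously
differentiable with derivative `v'`, and suppose that each `v t` lies in `L^∞`
and that `t ↦ v t` is continuous into `L^∞` (witnessed by the curve `w`).
Then `F(t) := |v(t)|² v(t)` is a continuously differentiable curve in `L²`, with
derivative `F'(t) = v(t)² conj(v'(t)) + 2 |v(t)|² v'(t)`. -/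
theorem cubic_nonlinearity_C1
    {X : Type*} [MeasurableSpace X] (μ : Measure X)
    (T : ℝ) (hT : 0 < T)
    (v v' : ℝ → Lp ℂ 2 μ)
    (hderiv : ∀ t ∈ Set.Icc (0 : ℝ) T, HasDerivWithinAt v (v' t) (Set.Icc 0 T) t)
    (hcont' : ContinuousOn v' (Set.Icc (0 : ℝ) T))
    (w : ℝ → Lp ℂ ⊤ μ)
    (hw : ∀ t ∈ Set.Icc (0 : ℝ) T, (w t : X → ℂ) =ᵐ[μ] (v t : X → ℂ))
    (hwcont : ContinuousOn w (Set.Icc (0 : ℝ) T)) :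
    ∃ F F' : ℝ → Lp ℂ 2 μ,
      (∀ t ∈ Set.Icc (0 : ℝ) T,
        (F t : X → ℂ) =ᵐ[μ]
          fun x => (‖(v t : X → ℂ) x‖) ^ 2 * (v t : X → ℂ) x) ∧
      (∀ t ∈ Set.Icc (0 : ℝ) T,
        (F' t : X → ℂ) =ᵐ[μ]
          fun x => ((v t : X → ℂ) x) ^ 2 * (starRingEnd ℂ) ((v' t : X → ℂ) x)
            + 2 * (‖(v t : X → ℂ) x‖) ^ 2 * ((v' t : X → ℂ) x)) ∧
      (∀ t ∈ Set.Icc (0 : ℝ) T, HasDerivWithinAt F (F' t) (Set.Icc 0 T) t) ∧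
      ContinuousOn F' (Set.Icc (0 : ℝ) T) := by
  set S := Set.Icc (0 : ℝ) T with hS
  set F : ℝ → Lp ℂ 2 μ := fun t => mulI2 (mulI (conjLp (w t)) (w t)) (v t) with hFdef
  set G : ℝ → Lp ℂ 2 μ := fun t =>
    mulI2 (mulI (w t) (w t)) (conjLp (v' t))
      + (2 : ℂ) • mulI2 (mulI (conjLp (w t)) (w t)) (v' t) with hGdef
  refine ⟨F, G, ?_, ?_, ?_, ?_⟩
  · -- a.e. formula for F
    intro t ht
    filter_upwards [coeFn_mulI2 (mulI (conjLp (w t)) (w t)) (v t),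
      coeFn_mulI (conjLp (w t)) (w t), coeFn_conjLp (w t), hw t ht] with x h1 h2 h3 h4
    show (mulI2 (mulI (conjLp (w t)) (w t)) (v t) : X → ℂ) x = _
    rw [h1, h2, h3, h4]
    have : (starRingEnd ℂ) ((v t : X → ℂ) x) * (v t : X → ℂ) x
        = ((‖(v t : X → ℂ) x‖ : ℝ) : ℂ) ^ 2 := by
      rw [mul_comm, Complex.mul_conj, Complex.normSq_eq_norm_sq]
      push_cast; ring
    rw [this]
  · -- a.e. formula for G
    intro t ht
    filter_upwards [Lp.coeFn_add (mulI2 (mulI (w t) (w t)) (conjLp (v' t)))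
        ((2 : ℂ) • mulI2 (mulI (conjLp (w t)) (w t)) (v' t)),
      Lp.coeFn_smul (2 : ℂ) (mulI2 (mulI (conjLp (w t)) (w t)) (v' t)),
      coeFn_mulI2 (mulI (w t) (w t)) (conjLp (v' t)),
      coeFn_mulI2 (mulI (conjLp (w t)) (w t)) (v' t),
      coeFn_mulI (w t) (w t), coeFn_mulI (conjLp (w t)) (w t),
      coeFn_conjLp (w t), coeFn_conjLp (v' t), hw t ht]
      with x h1 h2 h3 h4 h5 h6 h7 h8 h9
    show (G t : X → ℂ) x = _
    rw [h1, Pi.add_apply, h3, h2, Pi.smul_apply, h4, h5, h6, h7, h8, h9, smul_eq_mul]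
    have key : (starRingEnd ℂ) ((v t : X → ℂ) x) * (v t : X → ℂ) x
        = ((‖(v t : X → ℂ) x‖ : ℝ) : ℂ) ^ 2 := by
      rw [mul_comm, Complex.mul_conj, Complex.normSq_eq_norm_sq]
      push_cast
      ring
    push_cast
    rw [← key]
    ring
  · -- differentiability
    intro t ht
    rw [hasDerivWithinAt_iff_tendsto]
    have hwt : Tendsto w (nhdsWithin t S) (nhds (w t)) := hwcont t ht
    have hth : Tendsto (fun s => ‖s - t‖⁻¹ * ‖v s - v t - (s - t) • v' t‖)
        (nhdsWithin t S) (nhds 0) := hasDerivWithinAt_iff_tendsto.mp (hderiv t ht)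
    have key : ∀ s ∈ S, F s - F t - (s - t) • G t =
        mulI2 (mulI (w s) (w s) - mulI (w t) (w t)) (conjLp (v s - v t))
          + mulI2 (mulI (w t) (w t)) (conjLp (v s - v t - (s - t) • v' t))
          + mulI2 (mulI (w s - w t) (conjLp (w t))) (v s - v t)
          + mulI2 (mulI (w t + w t) (conjLp (w t))) (v s - v t - (s - t) • v' t) := by
      intro s hs
      apply Lp.ext
      filter_upwards [Lp.coeFn_sub (F s - F t) ((s - t) • G t),
        Lp.coeFn_sub (F s) (F t),
        Lp.coeFn_smul (s - t) (G t),
        coeFn_mulI2 (mulI (conjLp (w s)) (w s)) (v s),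
        coeFn_mulI2 (mulI (conjLp (w t)) (w t)) (v t),
        Lp.coeFn_add (mulI2 (mulI (w t) (w t)) (conjLp (v' t)))
          ((2 : ℂ) • mulI2 (mulI (conjLp (w t)) (w t)) (v' t)),
        Lp.coeFn_smul (2 : ℂ) (mulI2 (mulI (conjLp (w t)) (w t)) (v' t)),
        coeFn_mulI2 (mulI (w t) (w t)) (conjLp (v' t)),
        coeFn_mulI2 (mulI (conjLp (w t)) (w t)) (v' t),
        coeFn_mulI (conjLp (w s)) (w s),
        coeFn_mulI (conjLp (w t)) (w t),
        coeFn_mulI (w t) (w t),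
        coeFn_conjLp (w s), coeFn_conjLp (w t), coeFn_conjLp (v' t),
        Lp.coeFn_add (mulI2 (mulI (w s) (w s) - mulI (w t) (w t)) (conjLp (v s - v t))
            + mulI2 (mulI (w t) (w t)) (conjLp (v s - v t - (s - t) • v' t))
            + mulI2 (mulI (w s - w t) (conjLp (w t))) (v s - v t))
          (mulI2 (mulI (w t + w t) (conjLp (w t))) (v s - v t - (s - t) • v' t)),
        Lp.coeFn_add (mulI2 (mulI (w s) (w s) - mulI (w t) (w t)) (conjLp (v s - v t))
            + mulI2 (mulI (w t) (w t)) (conjLp (v s - v t - (s - t) • v' t)))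
          (mulI2 (mulI (w s - w t) (conjLp (w t))) (v s - v t)),
        Lp.coeFn_add (mulI2 (mulI (w s) (w s) - mulI (w t) (w t)) (conjLp (v s - v t)))
          (mulI2 (mulI (w t) (w t)) (conjLp (v s - v t - (s - t) • v' t))),
        coeFn_mulI2 (mulI (w s) (w s) - mulI (w t) (w t)) (conjLp (v s - v t)),
        coeFn_mulI2 (mulI (w t) (w t)) (conjLp (v s - v t - (s - t) • v' t)),
        coeFn_mulI2 (mulI (w s - w t) (conjLp (w t))) (v s - v t),
        coeFn_mulI2 (mulI (w t + w t) (conjLp (w t))) (v s - v t - (s - t) • v' t),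
        Lp.coeFn_sub (mulI (w s) (w s)) (mulI (w t) (w t)),
        coeFn_mulI (w s) (w s),
        coeFn_conjLp (v s - v t),
        Lp.coeFn_sub (v s) (v t),
        coeFn_conjLp (v s - v t - (s - t) • v' t),
        Lp.coeFn_sub (v s - v t) ((s - t) • v' t),
        Lp.coeFn_smul (s - t) (v' t),
        coeFn_mulI (w s - w t) (conjLp (w t)),
        Lp.coeFn_sub (w s) (w t),
        coeFn_mulI (w t + w t) (conjLp (w t)),
        Lp.coeFn_add (w t) (w t),
        hw s hs, hw t ht] with x e1 e2 e3 e4 e5 e6 e7 e8 e9 e10 e11 e12 e13 e14 e15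
          r16 r17 r18 r19 r20 r21 r22 r23 r24 r25 r26 r27 r28 r29 r30 r31 r32 r33 hws hwt'
      simp only [hFdef, hGdef] at e1 e2 e3 ⊢
      simp only [hFdef, hGdef, e1, e2, e3, e4, e5, e6, e7, e8, e9, e10, e11, e12, e13, e14,
        e15, r16, r17, r18, r19, r20, r21, r22, r23, r24, r25, r26, r27, r28, r29, r30, r31,
        r32, r33, Pi.sub_apply, Pi.add_apply, Pi.smul_apply]
      simp only [hws, hwt']
      simp only [Complex.real_smul, smul_eq_mul, map_sub, map_mul, Complex.conj_ofReal]
      ring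
    have hbound : ∀ s ∈ S, ‖s - t‖⁻¹ * ‖F s - F t - (s - t) • G t‖ ≤
        (‖w s - w t‖ * ‖w s‖ + ‖w t‖ * ‖w s - w t‖ + ‖w s - w t‖ * ‖w t‖) *
          (‖s - t‖⁻¹ * ‖v s - v t - (s - t) • v' t‖ + ‖v' t‖)
        + (‖mulI (w t) (w t)‖ + ‖mulI (w t + w t) (conjLp (w t))‖) *
          (‖s - t‖⁻¹ * ‖v s - v t - (s - t) • v' t‖) := by
      intro s hs
      rw [key s hs]
      have n1 : ‖mulI2 (mulI (w s) (w s) - mulI (w t) (w t)) (conjLp (v s - v t))‖ ≤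
          (‖w s - w t‖ * ‖w s‖ + ‖w t‖ * ‖w s - w t‖) * ‖v s - v t‖ := by
        refine (norm_mulI2_le _ _).trans ?_
        rw [norm_conjLp]
        exact mul_le_mul_of_nonneg_right (norm_mulI_diff_le _ _) (norm_nonneg _)
      have n2 : ‖mulI2 (mulI (w t) (w t)) (conjLp (v s - v t - (s - t) • v' t))‖ ≤
          ‖mulI (w t) (w t)‖ * ‖v s - v t - (s - t) • v' t‖ :=
        (norm_mulI2_le _ _).trans (by rw [norm_conjLp])
      have n3 : ‖mulI2 (mulI (w s - w t) (conjLp (w t))) (v s - v t)‖ ≤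
          (‖w s - w t‖ * ‖w t‖) * ‖v s - v t‖ := by
        refine (norm_mulI2_le _ _).trans ?_
        refine mul_le_mul_of_nonneg_right ((norm_mulI_le _ _).trans ?_) (norm_nonneg _)
        rw [norm_conjLp]
      have n4 : ‖mulI2 (mulI (w t + w t) (conjLp (w t))) (v s - v t - (s - t) • v' t)‖ ≤
          ‖mulI (w t + w t) (conjLp (w t))‖ * ‖v s - v t - (s - t) • v' t‖ :=
        norm_mulI2_le _ _
      have ntot := ((norm_add_le _ _).trans (add_le_add (((norm_add_le _ _).trans
        (add_le_add (((norm_add_le _ _).trans (add_le_add n1 n2))) n3))) n4))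
      have hi : (0:ℝ) ≤ ‖s - t‖⁻¹ := by positivity
      have hde : ‖v s - v t‖ ≤ ‖v s - v t - (s - t) • v' t‖ + ‖s - t‖ * ‖v' t‖ := by
        have h := norm_add_le (v s - v t - (s - t) • v' t) ((s - t) • v' t)
        rw [sub_add_cancel] at h
        simpa [norm_smul] using h
      have hone : ‖s - t‖⁻¹ * ‖s - t‖ ≤ 1 := by
        rcases eq_or_ne (‖s - t‖) 0 with h | h
        · simp [h]
        · rw [inv_mul_cancel₀ h]
      have hidelta : ‖s - t‖⁻¹ * ‖v s - v t‖ ≤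
          ‖s - t‖⁻¹ * ‖v s - v t - (s - t) • v' t‖ + ‖v' t‖ := by
        have h2 := mul_le_mul_of_nonneg_left hde hi
        have h3 : ‖s - t‖⁻¹ * (‖s - t‖ * ‖v' t‖) ≤ 1 * ‖v' t‖ := by
          rw [← mul_assoc]
          exact mul_le_mul_of_nonneg_right hone (norm_nonneg _)
        nlinarith
      have h0 := mul_le_mul_of_nonneg_left ntot hi
      have hd : (0:ℝ) ≤ ‖w s - w t‖ * ‖w s‖ + ‖w t‖ * ‖w s - w t‖ + ‖w s - w t‖ * ‖w t‖ := by
        positivity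
      have h5 := mul_le_mul_of_nonneg_left hidelta hd
      have hC2 : (0:ℝ) ≤ ‖mulI (w t) (w t)‖ := norm_nonneg _
      have hC4 : (0:ℝ) ≤ ‖mulI (w t + w t) (conjLp (w t))‖ := norm_nonneg _
      have hη : (0:ℝ) ≤ ‖v s - v t - (s - t) • v' t‖ := norm_nonneg _
      nlinarith [h0, h5, mul_le_mul_of_nonneg_left hη hi]
    have hws0 : Tendsto (fun s => ‖w s - w t‖) (nhdsWithin t S) (nhds 0) := by
      have := (hwt.sub (tendsto_const_nhds (x := w t))).norm
      simpa using this
    have hwsn : Tendsto (fun s => ‖w s‖) (nhdsWithin t S) (nhds ‖w t‖) := hwt.norm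
    have hB0 : Tendsto (fun s =>
        (‖w s - w t‖ * ‖w s‖ + ‖w t‖ * ‖w s - w t‖ + ‖w s - w t‖ * ‖w t‖) *
          (‖s - t‖⁻¹ * ‖v s - v t - (s - t) • v' t‖ + ‖v' t‖)
        + (‖mulI (w t) (w t)‖ + ‖mulI (w t + w t) (conjLp (w t))‖) *
          (‖s - t‖⁻¹ * ‖v s - v t - (s - t) • v' t‖)) (nhdsWithin t S) (nhds 0) := by
      have := ((((hws0.mul hwsn).add ((tendsto_const_nhds (x := ‖w t‖)).mul hws0)).add
        (hws0.mul (tendsto_const_nhds (x := ‖w t‖)))).mul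
          (hth.add (tendsto_const_nhds (x := ‖v' t‖)))).add
        ((tendsto_const_nhds
          (x := ‖mulI (w t) (w t)‖ + ‖mulI (w t + w t) (conjLp (w t))‖)).mul hth)
      simpa using this
    exact squeeze_zero' (eventually_nhdsWithin_of_forall fun s _ => by positivity)
      (eventually_nhdsWithin_of_forall hbound) hB0
  · -- continuity of the derivative
    intro t ht
    have hwt : Tendsto w (nhdsWithin t S) (nhds (w t)) := hwcont t ht
    have hvt : Tendsto v' (nhdsWithin t S) (nhds (v' t)) := hcont' t ht
    have hws0 : Tendsto (fun s => ‖w s - w t‖) (nhdsWithin t S) (nhds 0) := by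
      have := (hwt.sub (tendsto_const_nhds (x := w t))).norm
      simpa using this
    have hwsn : Tendsto (fun s => ‖w s‖) (nhdsWithin t S) (nhds ‖w t‖) := hwt.norm
    have hv0 : Tendsto (fun s => ‖v' s - v' t‖) (nhdsWithin t S) (nhds 0) := by
      have := (hvt.sub (tendsto_const_nhds (x := v' t))).norm
      simpa using this
    have hvn : Tendsto (fun s => ‖v' s‖) (nhdsWithin t S) (nhds ‖v' t‖) := hvt.norm
    have hbound : ∀ s, ‖G s - G t‖ ≤
        ((‖w s - w t‖ * ‖w s‖ + ‖w t‖ * ‖w s - w t‖) * ‖v' s‖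
          + ‖mulI (w t) (w t)‖ * ‖v' s - v' t‖)
        + 2 * ((‖w s - w t‖ * ‖w s‖ + ‖w t‖ * ‖w s - w t‖) * ‖v' s‖
          + ‖mulI (conjLp (w t)) (w t)‖ * ‖v' s - v' t‖) := by
      intro s
      have hdecomp : G s - G t =
          (mulI2 (mulI (w s) (w s)) (conjLp (v' s))
            - mulI2 (mulI (w t) (w t)) (conjLp (v' t)))
          + (2 : ℂ) • (mulI2 (mulI (conjLp (w s)) (w s)) (v' s)
            - mulI2 (mulI (conjLp (w t)) (w t)) (v' t)) := by
        simp only [hGdef]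
        rw [add_sub_add_comm, smul_sub]
      rw [hdecomp]
      have hA : ‖mulI2 (mulI (w s) (w s)) (conjLp (v' s))
            - mulI2 (mulI (w t) (w t)) (conjLp (v' t))‖ ≤
          (‖w s - w t‖ * ‖w s‖ + ‖w t‖ * ‖w s - w t‖) * ‖v' s‖
            + ‖mulI (w t) (w t)‖ * ‖v' s - v' t‖ := by
        rw [mulI2_sub_sub, conjLp_sub]
        refine (norm_add_le _ _).trans (add_le_add ?_ ?_)
        · refine (norm_mulI2_le _ _).trans ?_
          rw [norm_conjLp]
          exact mul_le_mul_of_nonneg_right (norm_mulI_diff_le _ _) (norm_nonneg _)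
        · exact (norm_mulI2_le _ _).trans (by rw [norm_conjLp])
      have hB : ‖mulI2 (mulI (conjLp (w s)) (w s)) (v' s)
            - mulI2 (mulI (conjLp (w t)) (w t)) (v' t)‖ ≤
          (‖w s - w t‖ * ‖w s‖ + ‖w t‖ * ‖w s - w t‖) * ‖v' s‖
            + ‖mulI (conjLp (w t)) (w t)‖ * ‖v' s - v' t‖ := by
        rw [mulI2_sub_sub]
        refine (norm_add_le _ _).trans (add_le_add ?_ (norm_mulI2_le _ _))
        refine (norm_mulI2_le _ _).trans ?_
        exact mul_le_mul_of_nonneg_right (norm_mulI_conj_diff_le _ _) (norm_nonneg _)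
      refine (norm_add_le _ _).trans ?_
      rw [norm_smul]
      have h2 : ‖(2:ℂ)‖ = 2 := by simp
      rw [h2]
      exact add_le_add hA (by nlinarith [hB, norm_nonneg (mulI2 (mulI (conjLp (w s)) (w s)) (v' s)
        - mulI2 (mulI (conjLp (w t)) (w t)) (v' t))])
    have hE : Tendsto (fun s =>
        ((‖w s - w t‖ * ‖w s‖ + ‖w t‖ * ‖w s - w t‖) * ‖v' s‖
          + ‖mulI (w t) (w t)‖ * ‖v' s - v' t‖)
        + 2 * ((‖w s - w t‖ * ‖w s‖ + ‖w t‖ * ‖w s - w t‖) * ‖v' s‖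
          + ‖mulI (conjLp (w t)) (w t)‖ * ‖v' s - v' t‖)) (nhdsWithin t S) (nhds 0) := by
      have := ((((hws0.mul hwsn).add ((tendsto_const_nhds (x := ‖w t‖)).mul hws0)).mul hvn).add
        ((tendsto_const_nhds (x := ‖mulI (w t) (w t)‖)).mul hv0)).add
        ((tendsto_const_nhds (x := (2:ℝ))).mul
          ((((hws0.mul hwsn).add ((tendsto_const_nhds (x := ‖w t‖)).mul hws0)).mul
          hvn).add ((tendsto_const_nhds (x := ‖mulI (conjLp (w t)) (w t)‖)).mul hv0)))
      simpa using this
    have : Tendsto (fun s => ‖G s - G t‖) (nhdsWithin t S) (nhds 0) :=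
      squeeze_zero (fun s => norm_nonneg _) hbound hE
    exact tendsto_iff_norm_sub_tendsto_zero.mpr this
end

section
/- (Asymptotics of the first three-dimensional renormalization constant, asserted in Theorem 2.40 of the paper.) Let m : ℝ³ → ℝ be a bounded function supported in a ball {x : |x| ≤ b} for some b > 0, and suppose that m(x) → 1 as x → 0 (x ≠ 0). For ε > 0 define c¹_ε := Σ_{k∈ℤ³, k≠0} |m(ε k)|² / |k|² (a finite sum, since m has compact support). Then there exist a constant C ≥ 1 and ε₀ ∈ (0,1) such that for all 0 < ε < ε₀ one has C^{−1} ε^{−1} ≤ c¹_ε ≤ C ε^{−1}; that is, c¹_ε ∼ 1/ε as ε → 0. -/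
noncomputable section
open Filter

namespace Renorm3d

def box (n : ℕ) : Finset (Fin 3 → ℤ) :=
  Fintype.piFinset fun _ => Finset.Icc (-(n : ℤ)) n

lemma mem_box {n : ℕ} {k : Fin 3 → ℤ} : k ∈ box n ↔ ∀ i, |k i| ≤ (n : ℤ) := by
  simp [box, Fintype.mem_piFinset, abs_le]

lemma box_mono {a c : ℕ} (h : a ≤ c) : box a ⊆ box c := fun k hk => by
  rw [mem_box] at hk ⊢
  intro i
  exact (hk i).trans (by exact_mod_cast h)

lemma card_box (n : ℕ) : (box n).card = (2 * n + 1) ^ 3 := by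
  rw [box, Fintype.card_piFinset]
  simp [Int.card_Icc]
  ring_nf
  omega

lemma latSq_nonneg (k : Fin 3 → ℤ) : 0 ≤ latSq k :=
  Finset.sum_nonneg fun i _ => sq_nonneg _

lemma sq_le_latSq (k : Fin 3 → ℤ) (i : Fin 3) : ((k i : ℝ)) ^ 2 ≤ latSq k :=
  Finset.single_le_sum (fun j _ => sq_nonneg ((k j : ℝ))) (Finset.mem_univ i)

lemma one_le_latSq {k : Fin 3 → ℤ} (hk : k ≠ 0) : 1 ≤ latSq k := by
  obtain ⟨i, hi⟩ := Function.ne_iff.mp hk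
  have h1 : (1 : ℤ) ≤ |k i| := Int.one_le_abs (by simpa using hi)
  have h2 : (1 : ℝ) ≤ |((k i : ℝ))| := by
    have : ((1:ℤ):ℝ) ≤ ((|k i| : ℤ) : ℝ) := by exact_mod_cast h1
    simpa [Int.cast_abs] using this
  have h3 : (1 : ℝ) ≤ ((k i : ℝ)) ^ 2 := by
    nlinarith [sq_abs ((k i : ℝ)), abs_nonneg ((k i : ℝ))]
  exact h3.trans (sq_le_latSq k i)

lemma sum_box_le (A : ℝ) (hA : 0 ≤ A) (g : (Fin 3 → ℤ) → ℝ)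
    (hg0 : g 0 = 0)
    (hg : ∀ k : Fin 3 → ℤ, k ≠ 0 → g k ≤ A / latSq k) :
    ∀ n : ℕ, ∑ k ∈ box n, g k ≤ 26 * A * n := by
  intro n
  induction n with
  | zero =>
    have hb0 : box 0 = {0} := by
      ext k
      simp only [mem_box, Finset.mem_singleton]
      constructor
      · intro h; funext i; simpa using h i
      · rintro rfl i; simp
    simp [hb0, hg0]
  | succ n ih =>
    have hsub : box n ⊆ box (n + 1) := box_mono (Nat.le_succ n)
    rw [← Finset.sum_sdiff hsub]
    have hcard : ((box (n + 1) \ box n).card : ℝ) ≤ 26 * ((n : ℝ) + 1) ^ 2 := by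
      rw [Finset.card_sdiff_of_subset hsub, card_box, card_box]
      have h1 : (2 * n + 1) ^ 3 ≤ (2 * (n + 1) + 1) ^ 3 := by
        apply Nat.pow_le_pow_left; omega
      rw [Nat.cast_sub h1]
      push_cast
      nlinarith [sq_nonneg ((n : ℝ))]
    have hterm : ∀ k ∈ box (n + 1) \ box n, g k ≤ A / ((n : ℝ) + 1) ^ 2 := by
      intro k hk
      obtain ⟨hk1, hk2⟩ := Finset.mem_sdiff.mp hk
      have hk0 : k ≠ 0 := by
        rintro rfl
        exact hk2 (mem_box.mpr fun i => by simp)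
      have hex : ∃ i, (n : ℤ) + 1 ≤ |k i| := by
        by_contra h
        push_neg at h
        exact hk2 (mem_box.mpr fun i => by have := h i; omega)
      obtain ⟨i, hi⟩ := hex
      have hcast : ((n : ℝ) + 1) ≤ |((k i : ℝ))| := by
        have : (((n : ℤ) + 1 : ℤ) : ℝ) ≤ ((|k i| : ℤ) : ℝ) := by exact_mod_cast hi
        simpa [Int.cast_abs] using this
      have h2 : ((n : ℝ) + 1) ^ 2 ≤ latSq k := by
        calc ((n : ℝ) + 1) ^ 2 ≤ |((k i : ℝ))| ^ 2 := by
              nlinarith [abs_nonneg ((k i : ℝ))]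
          _ = ((k i : ℝ)) ^ 2 := sq_abs _
          _ ≤ latSq k := sq_le_latSq k i
      calc g k ≤ A / latSq k := hg k hk0
        _ ≤ A / ((n : ℝ) + 1) ^ 2 := by
            apply div_le_div_of_nonneg_left hA (by positivity) h2
    have hsd : ∑ k ∈ box (n + 1) \ box n, g k ≤ 26 * A := by
      have h1 := Finset.sum_le_card_nsmul _ _ _ hterm
      rw [nsmul_eq_mul] at h1
      have h2 : ((box (n + 1) \ box n).card : ℝ) * (A / ((n : ℝ) + 1) ^ 2) ≤ 26 * A := by
        rw [mul_div_assoc']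
        rw [div_le_iff₀ (by positivity)]
        have := hcard
        nlinarith [(Nat.cast_nonneg (box (n + 1) \ box n).card : (0:ℝ) ≤ _), sq_nonneg ((n:ℝ)+1)]
      exact h1.trans h2
    have : (26 : ℝ) * A * ((n : ℕ) + 1 : ℕ) = 26 * A + 26 * A * n := by push_cast; ring
    rw [this]
    linarith

def cube (N : ℕ) : Finset (Fin 3 → ℤ) :=
  Fintype.piFinset fun _ => Finset.Icc (1 : ℤ) N

lemma mem_cube {N : ℕ} {k : Fin 3 → ℤ} : k ∈ cube N ↔ ∀ i, 1 ≤ k i ∧ k i ≤ (N : ℤ) := by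
  simp [cube, Fintype.mem_piFinset]

lemma card_cube (N : ℕ) : (cube N).card = N ^ 3 := by
  rw [cube, Fintype.card_piFinset]
  simp [Int.card_Icc]

lemma cube_ne_zero {N : ℕ} {k : Fin 3 → ℤ} (hk : k ∈ cube N) : k ≠ 0 := by
  intro h
  have := (mem_cube.mp hk 0).1
  rw [h] at this
  simp at this

lemma latSq_le_of_cube {N : ℕ} {k : Fin 3 → ℤ} (hk : k ∈ cube N) :
    latSq k ≤ 3 * (N : ℝ) ^ 2 := by
  have h : ∀ i, ((k i : ℝ)) ^ 2 ≤ (N : ℝ) ^ 2 := by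
    intro i
    obtain ⟨h1, h2⟩ := mem_cube.mp hk i
    have h1' : (1 : ℝ) ≤ (k i : ℝ) := by exact_mod_cast h1
    have h2' : ((k i : ℝ)) ≤ (N : ℝ) := by exact_mod_cast h2
    nlinarith
  calc latSq k ≤ ∑ _i : Fin 3, (N : ℝ) ^ 2 := Finset.sum_le_sum fun i _ => h i
    _ = 3 * (N : ℝ) ^ 2 := by simp

end Renorm3d
set_option maxHeartbeats 1000000 in
/-- **Asymptotics of the first three-dimensional renormalization constant.** If
`m : ℝ³ → ℝ` is bounded, supported in a ball, and `m(x) → 1` as `x → 0`, then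
`c¹_ε := Σ_{k ∈ ℤ³, k ≠ 0} |m(εk)|²/|k|²` satisfies
`C⁻¹ ε⁻¹ ≤ c¹_ε ≤ C ε⁻¹` for all small `ε > 0`. -/
theorem renormalization_constant_3d
    (m : (Fin 3 → ℝ) → ℝ)
    (M : ℝ) (hM : ∀ x, |m x| ≤ M)
    (b : ℝ) (hb : 0 < b)
    (hsupp : ∀ x, m x ≠ 0 → Real.sqrt (∑ i, x i ^ 2) ≤ b)
    (hlim : Tendsto m (nhdsWithin 0 {(0 : Fin 3 → ℝ)}ᶜ) (nhds 1)) :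
    ∃ C : ℝ, 1 ≤ C ∧ ∃ ε₀ : ℝ, 0 < ε₀ ∧ ε₀ < 1 ∧
      ∀ ε : ℝ, 0 < ε → ε < ε₀ →
        C⁻¹ * ε⁻¹ ≤
          (∑' k : Fin 3 → ℤ,
            if k ≠ 0 then (m fun i => ε * (k i : ℝ)) ^ 2 / latSq k else 0) ∧
        (∑' k : Fin 3 → ℤ,
            if k ≠ 0 then (m fun i => ε * (k i : ℝ)) ^ 2 / latSq k else 0) ≤
          C * ε⁻¹ := by
  have hM0 : 0 ≤ M := le_trans (abs_nonneg _) (hM 0)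
  -- extract δ from the limit hypothesis
  have h12 : ∀ᶠ x in nhdsWithin 0 {(0 : Fin 3 → ℝ)}ᶜ, 1 / 2 < m x :=
    hlim.eventually (eventually_gt_nhds (by norm_num))
  rw [Filter.Eventually, Metric.mem_nhdsWithin_iff] at h12
  obtain ⟨δ, hδ, hδm'⟩ := h12
  have hδm : ∀ x : Fin 3 → ℝ, x ≠ 0 → dist x 0 < δ → 1 / 2 < m x :=
    fun x hx hd => hδm' ⟨Metric.mem_ball.mpr hd, hx⟩
  set C : ℝ := 1 + max (48 / δ) (26 * M ^ 2 * (b + 1)) with hCdef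
  have hmaxpos : (0 : ℝ) < max (48 / δ) (26 * M ^ 2 * (b + 1)) :=
    lt_max_iff.mpr (Or.inl (by positivity))
  have hC1 : (1 : ℝ) ≤ C := by rw [hCdef]; linarith
  have hCpos : (0 : ℝ) < C := lt_of_lt_of_le one_pos hC1
  refine ⟨C, hC1, min (δ / 4) (1 / 2), by positivity,
    lt_of_le_of_lt (min_le_right _ _) (by norm_num), ?_⟩
  intro ε hε hεlt
  have hε4 : ε < δ / 4 := lt_of_lt_of_le hεlt (min_le_left _ _)
  have hε1 : ε < 1 := lt_trans (lt_of_lt_of_le hεlt (min_le_right _ _)) (by norm_num)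
  have hεinv : (0 : ℝ) < ε⁻¹ := by positivity
  set f : (Fin 3 → ℤ) → ℝ := fun k =>
    if k ≠ 0 then (m fun i => ε * (k i : ℝ)) ^ 2 / latSq k else 0 with hfdef
  have hf0 : f 0 = 0 := by simp [hfdef]
  have hfnn : ∀ k, 0 ≤ f k := by
    intro k
    by_cases hk : k = 0
    · simp [hfdef, hk]
    · simp only [hfdef, if_pos hk]
      exact div_nonneg (sq_nonneg _) (Renorm3d.latSq_nonneg k)
  have hfle : ∀ k : Fin 3 → ℤ, k ≠ 0 → f k ≤ M ^ 2 / latSq k := by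
    intro k hk
    simp only [hfdef, if_pos hk]
    have hl : (1 : ℝ) ≤ latSq k := Renorm3d.one_le_latSq hk
    have hm2 : (m fun i => ε * (k i : ℝ)) ^ 2 ≤ M ^ 2 := by
      nlinarith [hM (fun i => ε * (k i : ℝ)), abs_nonneg (m fun i => ε * (k i : ℝ)),
        sq_abs (m fun i => ε * (k i : ℝ))]
    exact div_le_div₀ (by positivity) hm2 (by linarith) le_rfl
  set N1 : ℕ := ⌈b / ε⌉₊ with hN1def
  have hsupport : ∀ k ∉ Renorm3d.box N1, f k = 0 := by
    intro k hk
    by_cases hk0 : k = 0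
    · simp [hfdef, hk0]
    by_cases hm0 : (m fun i => ε * (k i : ℝ)) = 0
    · simp [hfdef, hm0]
    exfalso
    apply hk
    have hs := hsupp _ hm0
    rw [Renorm3d.mem_box]
    intro i
    have h1 : ε * |((k i : ℝ))| ≤ b := by
      have hterm : (ε * (k i : ℝ)) ^ 2 ≤ ∑ j, (ε * (k j : ℝ)) ^ 2 :=
        Finset.single_le_sum (f := fun j => (ε * (k j : ℝ)) ^ 2)
          (fun j _ => sq_nonneg _) (Finset.mem_univ i)
      have h4 : Real.sqrt ((ε * (k i : ℝ)) ^ 2) ≤ b :=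
        le_trans (Real.sqrt_le_sqrt hterm) hs
      rwa [Real.sqrt_sq_eq_abs, abs_mul, abs_of_pos hε] at h4
    have h2 : |((k i : ℝ))| ≤ (N1 : ℝ) := by
      have h3 : |((k i : ℝ))| ≤ b / ε := by
        rw [le_div_iff₀ hε, mul_comm]
        exact h1
      exact h3.trans (Nat.le_ceil _)
    rw [← Int.cast_abs] at h2
    exact_mod_cast h2
  -- UPPER BOUND
  have hupper : (∑' k, f k) ≤ C * ε⁻¹ := by
    rw [tsum_eq_sum hsupport]
    have h1 := Renorm3d.sum_box_le (M ^ 2) (by positivity) f hf0 hfle N1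
    have hN1le : (N1 : ℝ) ≤ (b + 1) * ε⁻¹ := by
      have h2 : (N1 : ℝ) < b / ε + 1 := Nat.ceil_lt_add_one (by positivity)
      have hinv1 : (1 : ℝ) ≤ ε⁻¹ := (one_le_inv₀ hε).mpr (le_of_lt hε1)
      have h3 : b / ε + 1 ≤ (b + 1) * ε⁻¹ := by
        rw [div_eq_mul_inv]
        nlinarith
      linarith
    have hCge : 26 * M ^ 2 * (b + 1) ≤ C := le_trans (le_max_right _ _) (by rw [hCdef]; linarith)
    calc ∑ k ∈ Renorm3d.box N1, f k ≤ 26 * M ^ 2 * (N1 : ℝ) := h1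
      _ ≤ 26 * M ^ 2 * ((b + 1) * ε⁻¹) := by
          have h26 : (0 : ℝ) ≤ 26 * M ^ 2 := by positivity
          nlinarith
      _ = (26 * M ^ 2 * (b + 1)) * ε⁻¹ := by ring
      _ ≤ C * ε⁻¹ := mul_le_mul_of_nonneg_right hCge (le_of_lt hεinv)
  -- LOWER BOUND
  set N2 : ℕ := ⌊δ / (2 * ε)⌋₊ with hN2def
  have hδ2 : (2 : ℝ) ≤ δ / (2 * ε) := by
    rw [le_div_iff₀ (by positivity)]
    linarith
  have hN2one : 1 ≤ N2 := Nat.le_floor (by exact_mod_cast le_trans (by norm_num) hδ2)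
  have hN2le : (N2 : ℝ) ≤ δ / (2 * ε) := Nat.floor_le (by positivity)
  have hN2pos : (0 : ℝ) < (N2 : ℝ) := by exact_mod_cast hN2one
  have hN2ge : δ / (4 * ε) ≤ (N2 : ℝ) := by
    have h1 : δ / (2 * ε) - 1 < (N2 : ℝ) := Nat.sub_one_lt_floor _
    have h2 : (1 : ℝ) ≤ δ / (4 * ε) := by
      rw [le_div_iff₀ (by positivity)]
      linarith
    have e : δ / (2 * ε) = 2 * (δ / (4 * ε)) := by
      field_simp
      ring
    linarith [e ▸ h1]
  set Nb : ℕ := max N1 N2 with hNbdef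
  have hsupport' : ∀ k ∉ Renorm3d.box Nb, f k = 0 := fun k hk =>
    hsupport k fun h => hk (Renorm3d.box_mono (le_max_left _ _) h)
  have hcube : ∀ k ∈ Renorm3d.cube N2, (1 / 4 : ℝ) / (3 * (N2 : ℝ) ^ 2) ≤ f k := by
    intro k hk
    have hk0 := Renorm3d.cube_ne_zero hk
    have hεN2 : ε * (N2 : ℝ) ≤ δ / 2 := by
      have h := (le_div_iff₀ (by positivity : (0:ℝ) < 2 * ε)).mp hN2le
      linarith
    have hmk : 1 / 2 < m fun i => ε * (k i : ℝ) := by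
      apply hδm
      · intro hx
        have h0 := congrFun hx 0
        simp only [Pi.zero_apply] at h0
        obtain ⟨h1, _⟩ := Renorm3d.mem_cube.mp hk 0
        have h1' : (1 : ℝ) ≤ (k 0 : ℝ) := by exact_mod_cast h1
        nlinarith
      · rw [dist_pi_lt_iff hδ]
        intro i
        obtain ⟨h1, h2⟩ := Renorm3d.mem_cube.mp hk i
        have h1' : (1 : ℝ) ≤ (k i : ℝ) := by exact_mod_cast h1
        have h2' : ((k i : ℝ)) ≤ (N2 : ℝ) := by exact_mod_cast h2
        have hd : dist (ε * (k i : ℝ)) 0 = ε * (k i : ℝ) := by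
          rw [Real.dist_eq, sub_zero, abs_of_pos (by nlinarith)]
        simp only [Pi.zero_apply]
        rw [hd]
        nlinarith
    have hlat1 : (0 : ℝ) < latSq k := lt_of_lt_of_le one_pos (Renorm3d.one_le_latSq hk0)
    have hm14 : (1 / 4 : ℝ) ≤ (m fun i => ε * (k i : ℝ)) ^ 2 := by nlinarith
    simp only [hfdef, if_pos hk0]
    exact div_le_div₀ (sq_nonneg _) hm14 hlat1 (Renorm3d.latSq_le_of_cube hk)
  refine ⟨?_, hupper⟩
  rw [tsum_eq_sum hsupport']
  have hsub : Renorm3d.cube N2 ⊆ Renorm3d.box Nb := by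
    intro k hk
    rw [Renorm3d.mem_box]
    intro i
    obtain ⟨h1, h2⟩ := Renorm3d.mem_cube.mp hk i
    rw [abs_of_pos (by omega)]
    calc k i ≤ (N2 : ℤ) := h2
      _ ≤ (Nb : ℤ) := by exact_mod_cast le_max_right N1 N2
  have hmono : ∑ k ∈ Renorm3d.cube N2, f k ≤ ∑ k ∈ Renorm3d.box Nb, f k :=
    Finset.sum_le_sum_of_subset_of_nonneg hsub fun k _ _ => hfnn k
  have h2 := Finset.card_nsmul_le_sum _ _ _ hcube
  rw [Renorm3d.card_cube, nsmul_eq_mul] at h2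
  have h3 : (δ / 48) * ε⁻¹ ≤ ((N2 ^ 3 : ℕ) : ℝ) * ((1 / 4 : ℝ) / (3 * (N2 : ℝ) ^ 2)) := by
    have e : ((N2 ^ 3 : ℕ) : ℝ) * ((1 / 4 : ℝ) / (3 * (N2 : ℝ) ^ 2)) = (N2 : ℝ) / 12 := by
      push_cast
      field_simp
      ring
    rw [e]
    have h5 : δ ≤ (N2 : ℝ) * (4 * ε) := by
      rw [div_le_iff₀ (by positivity : (0:ℝ) < 4 * ε)] at hN2ge
      linarith
    have h7 : (4 * ε) * ε⁻¹ = 4 := by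
      rw [mul_assoc, mul_inv_cancel₀ (ne_of_gt hε), mul_one]
    have h8 : (N2 : ℝ) * (4 * ε) * ε⁻¹ = (N2 : ℝ) * 4 := by
      rw [mul_assoc, h7]
    linarith [mul_le_mul_of_nonneg_right h5 (le_of_lt hεinv), h8]
  have hCinv : C⁻¹ ≤ δ / 48 := by
    have h48 : 48 / δ ≤ C := le_trans (le_max_left _ _) (by rw [hCdef]; linarith)
    have hpos : (0 : ℝ) < 48 / δ := by positivity
    calc C⁻¹ ≤ (48 / δ)⁻¹ := inv_anti₀ hpos h48
      _ = δ / 48 := by rw [inv_div]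
  calc C⁻¹ * ε⁻¹ ≤ (δ / 48) * ε⁻¹ := mul_le_mul_of_nonneg_right hCinv (le_of_lt hεinv)
    _ ≤ ((N2 ^ 3 : ℕ) : ℝ) * ((1 / 4 : ℝ) / (3 * (N2 : ℝ) ^ 2)) := h3
    _ ≤ ∑ k ∈ Renorm3d.cube N2, f k := h2
    _ ≤ ∑ k ∈ Renorm3d.box Nb, f k := hmono
end
end
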